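/- arXiv:2510.03923 — 3 statements merged into one kernel-verified Lean document; each statement's English description precedes it below -/
import Mathlib

section
/- Suppose ρ is normalized Lipschitz and each filter coefficient t ↦ h_{fgk}^{(ℓ,t)} is continuous on [0,T], with h_T := sup_{t∈[0,T]} max_{f,g,k,ℓ} |h_{fgk}^{(ℓ,t)}|. Let W, Wₙ : I² → ℝ be measurable with |W| ≤ 1 and |Wₙ| ≤ 1, let Z, Zₙ ∈ L^∞(I;ℝ^F), and let X and Xₙ be the solutions on [0,T] of the Graphon-NDEs with data (W, Z) and (Wₙ, Zₙ) respectively and the same filters. Then sup_{t∈[0,T]} ‖Xₙ(t) − X(t)‖_{L²(I;ℝ^F)} ≤ P ‖Zₙ − Z‖_{L²(I;ℝ^F)} + Q ‖T_{Wₙ} − T_W‖_{L²(I)→L²(I)}, where P := exp(T (F K h_T)^L) and Q := (P − 1) L K · sup_{t∈[0,T]} ‖X(t)‖_{L²(I;ℝ^F)}. -/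
open MeasureTheory Filter Set
open scoped ENNReal NNReal

noncomputable section

/-- Lebesgue measure restricted to the unit interval `I = [0,1]`. -/
def μI : Measure ℝ := volume.restrict (Set.Icc (0:ℝ) 1)

/-- Lebesgue measure restricted to the unit square `I² = [0,1]²`. -/
def μI2 : Measure (ℝ × ℝ) := volume.restrict ((Set.Icc (0:ℝ) 1) ×ˢ (Set.Icc (0:ℝ) 1))

/-- The graphon integral operator `(T_W x)(v) = ∫_I W(u,v) x(u) du`. -/
def graphonOp (W : ℝ → ℝ → ℝ) (x : ℝ → ℝ) : ℝ → ℝ :=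
  fun v => ∫ u in Set.Icc (0:ℝ) 1, W u v * x u

/-- `k`-fold composition `T_W^k` (identity for `k = 0`). -/
def graphonIter (W : ℝ → ℝ → ℝ) (k : ℕ) (x : ℝ → ℝ) : ℝ → ℝ :=
  (graphonOp W)^[k] x

/-- `ρ` is normalized Lipschitz: `|ρ x − ρ y| ≤ |x − y|` and `ρ 0 = 0`. -/
def NormalizedLipschitz (ρ : ℝ → ℝ) : Prop :=
  (∀ x y : ℝ, |ρ x - ρ y| ≤ |x - y|) ∧ ρ 0 = 0

/-- One layer of a graphon neural network. -/
def gnnLayer (F K : ℕ) (W : ℝ → ℝ → ℝ) (ρ : ℝ → ℝ)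
    (h : Fin F → Fin F → Fin K → ℝ) (X : Fin F → ℝ → ℝ) : Fin F → ℝ → ℝ :=
  fun f u => ρ (∑ g : Fin F, ∑ k : Fin K, h f g k * graphonIter W (k : ℕ) (X g) u)

/-- The `L`-layer graphon neural network `Φ(W; X; h)`. -/
def gnn (F K L : ℕ) (W : ℝ → ℝ → ℝ) (ρ : ℝ → ℝ)
    (h : Fin L → Fin F → Fin F → Fin K → ℝ) (X : Fin F → ℝ → ℝ) : Fin F → ℝ → ℝ :=
  (List.ofFn h).foldl (fun Y hl => gnnLayer F K W ρ hl Y) X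

/-- The mixed norm `‖X‖_{L^p(I;ℝ^F)} = (∑_f ‖X_f‖_{L^p(I)}²)^{1/2}`. -/
def vecLpNorm (F : ℕ) (p : ℝ≥0∞) (X : Fin F → ℝ → ℝ) : ℝ :=
  Real.sqrt (∑ f : Fin F, ((eLpNorm (X f) p μI).toReal) ^ 2)

/-- `X : ℝ → L^∞(I;ℝ^F)` is, on `[0,T]`, a continuously differentiable solution of the
Graphon-NDE `dX/dt(t) = Φ(W; X(t); H(t))`, `X(0) = Z`, in the Banach space `L^∞(I;ℝ^F)`. -/
def IsGNDESolution (F K L : ℕ) (T : ℝ) (W : ℝ → ℝ → ℝ) (ρ : ℝ → ℝ)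
    (H : ℝ → Fin L → Fin F → Fin F → Fin K → ℝ) (Z : Fin F → ℝ → ℝ)
    (X : ℝ → Fin F → Lp ℝ ⊤ μI) : Prop :=
  (∀ f, (X 0 f : ℝ → ℝ) =ᵐ[μI] Z f) ∧
  ∃ X' : ℝ → Fin F → Lp ℝ ⊤ μI,
    ContinuousOn X' (Set.Icc 0 T) ∧
    ∀ t ∈ Set.Icc (0:ℝ) T,
      HasDerivWithinAt X (X' t) (Set.Icc 0 T) t ∧
      ∀ f, (X' t f : ℝ → ℝ) =ᵐ[μI]
        gnn F K L W ρ (H t) (fun g => (X t g : ℝ → ℝ)) f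

/-- Operator norm (from `L²(I)` to `L²(I)`) of the difference `T_W − T_{W'}`. -/
def graphonOpNormSub (W W' : ℝ → ℝ → ℝ) : ℝ :=
  ⨆ x : {x : ℝ → ℝ // MemLp x 2 μI ∧ eLpNorm x 2 μI ≤ 1},
    (eLpNorm (fun v => graphonOp W x v - graphonOp W' x v) 2 μI).toReal

/-- Left endpoint `u_i = (i−1)/n` of the cell `I_i` containing `u`. -/
def stepPt (n : ℕ) (u : ℝ) : ℝ := (⌊(n : ℝ) * u⌋ : ℝ) / n

/-- Sampled step kernel: `Wₙ(u,v) = W(u_i,u_j)` for `(u,v) ∈ I_i × I_j`. -/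
def sampKernel (W : ℝ → ℝ → ℝ) (n : ℕ) : ℝ → ℝ → ℝ :=
  fun u v => W (stepPt n u) (stepPt n v)

/-- Sampled step datum: `Zₙ(u) = Z(u_i)` for `u ∈ I_i`. -/
def sampDatum (F : ℕ) (Z : Fin F → ℝ → ℝ) (n : ℕ) : Fin F → ℝ → ℝ :=
  fun f u => Z f (stepPt n u)

/-- Support `W⁺ = {(u,v) ∈ I² : W(u,v) = 1}`. -/
def supportSet (W : ℝ → ℝ → ℝ) : Set (ℝ × ℝ) :=
  {p : ℝ × ℝ | p.1 ∈ Set.Icc (0:ℝ) 1 ∧ p.2 ∈ Set.Icc (0:ℝ) 1 ∧ W p.1 p.2 = 1}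

/-- The cell `I_i = [u_i, u_i + 1/n)` containing `u`. -/
def cell (n : ℕ) (u : ℝ) : Set ℝ := Set.Ico (stepPt n u) (stepPt n u + 1 / n)

open scoped Classical in
/-- Cell-intersection step kernel: `Wₙ = 1` on `I_i × I_j` iff `(I_i × I_j) ∩ W⁺ ≠ ∅`. -/
def interKernel (W : ℝ → ℝ → ℝ) (n : ℕ) : ℝ → ℝ → ℝ :=
  fun u v => if ((cell n u ×ˢ cell n v) ∩ supportSet W).Nonempty then 1 else 0

/-- Cell-average step datum: `Zₙ(u) = n ∫_{I_i} Z(v) dv` for `u ∈ I_i`. -/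
def cellAvg (F : ℕ) (Z : Fin F → ℝ → ℝ) (n : ℕ) : Fin F → ℝ → ℝ :=
  fun f u => (n : ℝ) * ∫ v in cell n u, Z f v

/-- Number of closed `δ`-mesh squares `[iδ,(i+1)δ] × [jδ,(j+1)δ]`, `i,j ∈ ℤ`, meeting `Ω`. -/
def meshCount (δ : ℝ) (Ω : Set (ℝ × ℝ)) : ℕ :=
  Set.ncard {p : ℤ × ℤ |
    ((Set.Icc ((p.1 : ℝ) * δ) (((p.1 : ℝ) + 1) * δ) ×ˢ
      Set.Icc ((p.2 : ℝ) * δ) (((p.2 : ℝ) + 1) * δ)) ∩ Ω).Nonempty}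

/-- Upper box-counting dimension `limsup_{δ→0⁺} log N_δ(Ω) / (−log δ)`. -/
def upperBoxDim (Ω : Set (ℝ × ℝ)) : ℝ :=
  Filter.limsup (fun δ : ℝ => Real.log (meshCount δ Ω) / (-Real.log δ))
    (nhdsWithin 0 (Set.Ioi 0))

end

noncomputable section
open scoped Topology

instance : IsProbabilityMeasure μI := by
  constructor; simp [μI, Measure.restrict_apply_univ]

def p2 (x : ℝ → ℝ) : ℝ := (eLpNorm x 2 μI).toReal

lemma p2_nonneg (x : ℝ → ℝ) : 0 ≤ p2 x := ENNReal.toReal_nonneg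

lemma mem2_of_top {x : ℝ → ℝ} (hx : MemLp x ⊤ μI) : MemLp x 2 μI :=
  hx.mono_exponent le_top

lemma int_of_mem2 {x : ℝ → ℝ} (hx : MemLp x 2 μI) : Integrable x μI :=
  (hx.mono_exponent (by norm_num : (1:ℝ≥0∞) ≤ 2)).integrable le_rfl

lemma p2_congr {x y : ℝ → ℝ} (h : x =ᵐ[μI] y) : p2 x = p2 y := by
  unfold p2; rw [eLpNorm_congr_ae h]

lemma graphonOp_eq_integral (W : ℝ → ℝ → ℝ) (x : ℝ → ℝ) (v : ℝ) :
    graphonOp W x v = ∫ u, W u v * x u ∂μI := rfl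

lemma graphonOp_congr (W : ℝ → ℝ → ℝ) {x y : ℝ → ℝ} (h : x =ᵐ[μI] y) :
    graphonOp W x = graphonOp W y := by
  funext v
  exact integral_congr_ae (h.mono fun u hu => by simp only [hu])

lemma graphonOp_sm {W : ℝ → ℝ → ℝ} (hWm : Measurable (Function.uncurry W))
    {x : ℝ → ℝ} (hx : AEStronglyMeasurable x μI) :
    AEStronglyMeasurable (graphonOp W x) μI := by
  obtain ⟨x', hx'm, hx'⟩ := hx.aemeasurable
  have heq : graphonOp W x = graphonOp W x' := graphonOp_congr W hx'
  rw [heq]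
  have : StronglyMeasurable fun v => ∫ u, W u v * x' u ∂μI := by
    apply MeasureTheory.StronglyMeasurable.integral_prod_left
    exact ((hWm.comp measurable_id).mul (hx'm.comp measurable_fst)).stronglyMeasurable
  exact this.aestronglyMeasurable

lemma abs_graphonOp_le {W : ℝ → ℝ → ℝ} (hWb : ∀ u v, |W u v| ≤ 1)
    {x : ℝ → ℝ} (hx : MemLp x 2 μI) (v : ℝ) :
    |graphonOp W x v| ≤ p2 x := by
  have hint : Integrable x μI := int_of_mem2 hx
  have h1 : |graphonOp W x v| ≤ ∫ u, |x u| ∂μI := by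
    rw [graphonOp_eq_integral]
    calc |∫ u, W u v * x u ∂μI| = ‖∫ u, W u v * x u ∂μI‖ := (Real.norm_eq_abs _).symm
    _ ≤ ∫ u, ‖W u v * x u‖ ∂μI := norm_integral_le_integral_norm _
    _ ≤ ∫ u, |x u| ∂μI := by
        apply integral_mono_of_nonneg (Eventually.of_forall fun u => norm_nonneg _) hint.abs
        refine Eventually.of_forall fun u => ?_
        show |W u v * x u| ≤ |x u|
        rw [abs_mul]
        exact mul_le_of_le_one_left (abs_nonneg _) (hWb u v)
  refine h1.trans ?_
  have h2 : ∫ u, |x u| ∂μI = (eLpNorm x 1 μI).toReal := by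
    rw [eLpNorm_one_eq_lintegral_enorm,
      ← integral_norm_eq_lintegral_enorm hx.aestronglyMeasurable]
    rfl
  rw [h2]
  apply ENNReal.toReal_mono hx.2.ne
  exact eLpNorm_le_eLpNorm_of_exponent_le (by norm_num) hx.aestronglyMeasurable

lemma graphonOp_memTop {W : ℝ → ℝ → ℝ} (hWm : Measurable (Function.uncurry W))
    (hWb : ∀ u v, |W u v| ≤ 1) {x : ℝ → ℝ} (hx : MemLp x 2 μI) :
    MemLp (graphonOp W x) ⊤ μI := by
  refine memLp_top_of_bound (graphonOp_sm hWm hx.aestronglyMeasurable) (p2 x) ?_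
  exact Eventually.of_forall fun v => abs_graphonOp_le hWb hx v

lemma p2_le_of_abs_le {x : ℝ → ℝ} (hx : AEStronglyMeasurable x μI) {C : ℝ}
    (h : ∀ v, |x v| ≤ C) : p2 x ≤ C := by
  have h0 : 0 ≤ C := le_trans (abs_nonneg _) (h 0)
  have := eLpNorm_le_of_ae_bound (μ := μI) (p := 2) (f := x) (Eventually.of_forall h)
  unfold p2
  calc (eLpNorm x 2 μI).toReal ≤ ((μI Set.univ ^ (2:ℝ≥0∞).toReal⁻¹) * ENNReal.ofReal C).toReal := by
        apply ENNReal.toReal_mono _ this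
        simp [measure_univ]
  _ = C := by simp [measure_univ, ENNReal.toReal_ofReal h0]

lemma graphonOp_p2_le {W : ℝ → ℝ → ℝ} (hWm : Measurable (Function.uncurry W))
    (hWb : ∀ u v, |W u v| ≤ 1) {x : ℝ → ℝ} (hx : MemLp x 2 μI) :
    p2 (graphonOp W x) ≤ p2 x :=
  p2_le_of_abs_le (graphonOp_sm hWm hx.aestronglyMeasurable) (abs_graphonOp_le hWb hx)

lemma graphonOp_sub (W : ℝ → ℝ → ℝ) {x y : ℝ → ℝ} (hx : Integrable x μI)
    (hy : Integrable y μI) (hWm : Measurable (Function.uncurry W)) (hWb : ∀ u v, |W u v| ≤ 1) :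
    graphonOp W (fun u => x u - y u) = fun v => graphonOp W x v - graphonOp W y v := by
  funext v
  have hWv : ∀ z : ℝ → ℝ, Integrable z μI → Integrable (fun u => W u v * z u) μI := by
    intro z hz
    refine Integrable.mono' hz.abs ?_ ?_
    · exact (((hWm.comp (measurable_id.prodMk measurable_const)).aemeasurable).aestronglyMeasurable.mul
        hz.aestronglyMeasurable)
    · refine Eventually.of_forall fun u => ?_
      show |W u v * z u| ≤ |z u|
      rw [abs_mul]; exact mul_le_of_le_one_left (abs_nonneg _) (hWb u v)
  show (∫ u, W u v * (x u - y u) ∂μI) = _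
  have : ∀ u, W u v * (x u - y u) = W u v * x u - W u v * y u := fun u => by ring
  simp only [this]
  exact integral_sub (hWv x hx) (hWv y hy)

lemma graphonOp_const_mul (W : ℝ → ℝ → ℝ) (x : ℝ → ℝ) (c : ℝ) :
    graphonOp W (fun u => c * x u) = fun v => c * graphonOp W x v := by
  funext v
  show (∫ u, W u v * (c * x u) ∂μI) = c * ∫ u, W u v * x u ∂μI
  rw [← integral_const_mul]
  congr 1; funext u; ring

lemma graphonOp_zero (W : ℝ → ℝ → ℝ) {x : ℝ → ℝ} (hx : x =ᵐ[μI] 0) :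
    graphonOp W x = 0 := by
  rw [graphonOp_congr W hx]
  funext v
  show (∫ u, W u v * (0:ℝ) ∂μI) = 0
  simp

lemma p2_add_le {a b : ℝ → ℝ} (ha : MemLp a 2 μI) (hb : MemLp b 2 μI) :
    p2 (fun u => a u + b u) ≤ p2 a + p2 b := by
  have h := eLpNorm_add_le ha.aestronglyMeasurable hb.aestronglyMeasurable
    (by norm_num : (1:ℝ≥0∞) ≤ 2)
  unfold p2
  calc (eLpNorm (fun u => a u + b u) 2 μI).toReal
      ≤ (eLpNorm a 2 μI + eLpNorm b 2 μI).toReal := by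
        apply ENNReal.toReal_mono (ENNReal.add_ne_top.2 ⟨ha.2.ne, hb.2.ne⟩)
        exact h
  _ = _ := ENNReal.toReal_add ha.2.ne hb.2.ne

lemma p2_sub_le {a b : ℝ → ℝ} (ha : MemLp a 2 μI) (hb : MemLp b 2 μI) :
    p2 (fun u => a u - b u) ≤ p2 a + p2 b := by
  have := p2_add_le ha hb.neg
  simp only [Pi.neg_apply] at this
  calc p2 (fun u => a u - b u) = p2 (fun u => a u + -(b u)) := by
        simp only [sub_eq_add_neg]
  _ ≤ p2 a + p2 (fun u => -(b u)) := p2_add_le ha hb.neg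
  _ = p2 a + p2 b := by
        have hnb : (fun u => -(b u)) = -b := rfl
        unfold p2
        rw [hnb, eLpNorm_neg]

lemma p2_const_mul (c : ℝ) (x : ℝ → ℝ) : p2 (fun u => c * x u) = |c| * p2 x := by
  unfold p2
  have : (fun u => c * x u) = c • x := by funext u; simp [Pi.smul_apply]
  rw [this, eLpNorm_const_smul]
  simp [ENNReal.toReal_mul]

lemma opNormSub_bddAbove (Wa Wb : ℝ → ℝ → ℝ)
    (hWam : Measurable (Function.uncurry Wa)) (hWab : ∀ u v, |Wa u v| ≤ 1)
    (hWbm : Measurable (Function.uncurry Wb)) (hWbb : ∀ u v, |Wb u v| ≤ 1) :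
    ∀ x : {x : ℝ → ℝ // MemLp x 2 μI ∧ eLpNorm x 2 μI ≤ 1},
      (eLpNorm (fun v => graphonOp Wa x v - graphonOp Wb x v) 2 μI).toReal ≤ 2 := by
  rintro ⟨x, hx, hx1⟩
  have hx2 : p2 x ≤ 1 := by
    unfold p2
    calc (eLpNorm x 2 μI).toReal ≤ (1:ℝ≥0∞).toReal := ENNReal.toReal_mono (by simp) hx1
    _ = 1 := by simp
  calc (eLpNorm (fun v => graphonOp Wa x v - graphonOp Wb x v) 2 μI).toReal
      = p2 (fun v => graphonOp Wa x v - graphonOp Wb x v) := rfl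
  _ ≤ p2 (graphonOp Wa x) + p2 (graphonOp Wb x) :=
      p2_sub_le (mem2_of_top (graphonOp_memTop hWam hWab hx))
        (mem2_of_top (graphonOp_memTop hWbm hWbb hx))
  _ ≤ p2 x + p2 x := add_le_add (graphonOp_p2_le hWam hWab hx) (graphonOp_p2_le hWbm hWbb hx)
  _ ≤ 2 := by linarith

lemma opNormSub_nonneg (Wa Wb : ℝ → ℝ → ℝ)
    (hWam : Measurable (Function.uncurry Wa)) (hWab : ∀ u v, |Wa u v| ≤ 1)
    (hWbm : Measurable (Function.uncurry Wb)) (hWbb : ∀ u v, |Wb u v| ≤ 1) :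
    0 ≤ graphonOpNormSub Wa Wb := by
  have h0 : MemLp (fun _ : ℝ => (0:ℝ)) 2 μI := memLp_const 0
  have := le_ciSup (f := fun x : {x : ℝ → ℝ // MemLp x 2 μI ∧ eLpNorm x 2 μI ≤ 1} =>
      (eLpNorm (fun v => graphonOp Wa x v - graphonOp Wb x v) 2 μI).toReal)
    ⟨2, by rintro y ⟨x, rfl⟩; exact opNormSub_bddAbove Wa Wb hWam hWab hWbm hWbb x⟩
    ⟨(fun _ => 0), h0, by simp [eLpNorm_congr_ae (ae_of_all _ fun u => rfl)]⟩
  refine le_trans ?_ this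
  exact ENNReal.toReal_nonneg

lemma opSub_apply {Wa Wb : ℝ → ℝ → ℝ}
    (hWam : Measurable (Function.uncurry Wa)) (hWab : ∀ u v, |Wa u v| ≤ 1)
    (hWbm : Measurable (Function.uncurry Wb)) (hWbb : ∀ u v, |Wb u v| ≤ 1)
    {x : ℝ → ℝ} (hx : MemLp x 2 μI) :
    p2 (fun v => graphonOp Wa x v - graphonOp Wb x v) ≤ graphonOpNormSub Wa Wb * p2 x := by
  by_cases h0 : eLpNorm x 2 μI = 0
  · have hx0 : x =ᵐ[μI] 0 := (eLpNorm_eq_zero_iff hx.aestronglyMeasurable (by norm_num)).1 h0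
    have ha := graphonOp_zero Wa hx0
    have hb := graphonOp_zero Wb hx0
    have : (fun v => graphonOp Wa x v - graphonOp Wb x v) = fun _ => (0:ℝ) := by
      rw [ha, hb]; funext v; simp
    rw [this]
    have : p2 (fun _ => (0:ℝ)) = 0 := by
      unfold p2; rw [eLpNorm_zero']; simp
    rw [this]
    have : p2 x = 0 := by unfold p2; rw [h0]; simp
    rw [this, mul_zero]
  · set c : ℝ := p2 x with hc
    have hcpos : 0 < c := by
      have := ENNReal.toReal_pos h0 hx.2.ne
      exact this
    set y : ℝ → ℝ := fun u => c⁻¹ * x u with hy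
    have hym : MemLp y 2 μI := hx.const_mul _
    have hp2y : p2 y = 1 := by
      rw [hy, p2_const_mul, abs_of_pos (inv_pos.2 hcpos), ← hc, inv_mul_cancel₀ hcpos.ne']
    have hyle : eLpNorm y 2 μI ≤ 1 := by
      have := ENNReal.ofReal_toReal hym.2.ne
      rw [← this]
      unfold p2 at hp2y
      rw [hp2y]
      simp
    have key := le_ciSup (f := fun x : {x : ℝ → ℝ // MemLp x 2 μI ∧ eLpNorm x 2 μI ≤ 1} =>
        (eLpNorm (fun v => graphonOp Wa x v - graphonOp Wb x v) 2 μI).toReal)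
      ⟨2, by rintro z ⟨x, rfl⟩; exact opNormSub_bddAbove Wa Wb hWam hWab hWbm hWbb x⟩
      ⟨y, hym, hyle⟩
    have hval : (eLpNorm (fun v => graphonOp Wa y v - graphonOp Wb y v) 2 μI).toReal
        = c⁻¹ * p2 (fun v => graphonOp Wa x v - graphonOp Wb x v) := by
      have h1 : (fun v => graphonOp Wa y v - graphonOp Wb y v)
          = fun v => c⁻¹ * (graphonOp Wa x v - graphonOp Wb x v) := by
        rw [hy, graphonOp_const_mul, graphonOp_const_mul]
        funext v; ring
      rw [h1]
      have := p2_const_mul c⁻¹ (fun v => graphonOp Wa x v - graphonOp Wb x v)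
      rw [abs_of_pos (inv_pos.2 hcpos)] at this
      exact this
    rw [hval] at key
    have := mul_le_mul_of_nonneg_right key (le_of_lt hcpos)
    rw [mul_comm c⁻¹ _, mul_assoc, inv_mul_cancel₀ hcpos.ne', mul_one] at this
    exact this

lemma iter_mem2 {W : ℝ → ℝ → ℝ} (hWm : Measurable (Function.uncurry W))
    (hWb : ∀ u v, |W u v| ≤ 1) {x : ℝ → ℝ} (hx : MemLp x 2 μI) (k : ℕ) :
    MemLp (graphonIter W k x) 2 μI := by
  induction k with
  | zero => exact hx
  | succ k ih =>
    have : graphonIter W (k+1) x = graphonOp W (graphonIter W k x) :=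
      Function.iterate_succ_apply' _ _ _
    rw [this]
    exact mem2_of_top (graphonOp_memTop hWm hWb ih)

lemma iter_p2_le {W : ℝ → ℝ → ℝ} (hWm : Measurable (Function.uncurry W))
    (hWb : ∀ u v, |W u v| ≤ 1) {x : ℝ → ℝ} (hx : MemLp x 2 μI) (k : ℕ) :
    p2 (graphonIter W k x) ≤ p2 x := by
  induction k with
  | zero => exact le_rfl
  | succ k ih =>
    have h : graphonIter W (k+1) x = graphonOp W (graphonIter W k x) :=
      Function.iterate_succ_apply' _ _ _
    rw [h]
    exact le_trans (graphonOp_p2_le hWm hWb (iter_mem2 hWm hWb hx k)) ih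

lemma iter_diff_le {Wa Wb : ℝ → ℝ → ℝ}
    (hWam : Measurable (Function.uncurry Wa)) (hWab : ∀ u v, |Wa u v| ≤ 1)
    (hWbm : Measurable (Function.uncurry Wb)) (hWbb : ∀ u v, |Wb u v| ≤ 1)
    {x : ℝ → ℝ} (hx : MemLp x 2 μI) (k : ℕ) :
    p2 (fun v => graphonIter Wa k x v - graphonIter Wb k x v)
      ≤ k * graphonOpNormSub Wa Wb * p2 x := by
  induction k with
  | zero =>
    simp only [graphonIter, Function.iterate_zero, id_eq, sub_self]
    have : p2 (fun _ : ℝ => (0:ℝ)) = 0 := by unfold p2; rw [eLpNorm_zero']; simp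
    rw [this]
    simp
  | succ k ih =>
    have ha : graphonIter Wa (k+1) x = graphonOp Wa (graphonIter Wa k x) :=
      Function.iterate_succ_apply' _ _ _
    have hb : graphonIter Wb (k+1) x = graphonOp Wb (graphonIter Wb k x) :=
      Function.iterate_succ_apply' _ _ _
    have hmema := iter_mem2 hWam hWab hx k
    have hmemb := iter_mem2 hWbm hWbb hx k
    have hsplit : ∀ v, graphonIter Wa (k+1) x v - graphonIter Wb (k+1) x v
        = (graphonOp Wa (graphonIter Wa k x) v - graphonOp Wa (graphonIter Wb k x) v)
          + (graphonOp Wa (graphonIter Wb k x) v - graphonOp Wb (graphonIter Wb k x) v) := by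
      intro v; rw [ha, hb]; ring
    have hlin : (fun v => graphonOp Wa (graphonIter Wa k x) v - graphonOp Wa (graphonIter Wb k x) v)
        = graphonOp Wa (fun u => graphonIter Wa k x u - graphonIter Wb k x u) := by
      rw [graphonOp_sub Wa (int_of_mem2 hmema) (int_of_mem2 hmemb) hWam hWab]
    have hmemdiff : MemLp (fun u => graphonIter Wa k x u - graphonIter Wb k x u) 2 μI :=
      hmema.sub hmemb
    calc p2 (fun v => graphonIter Wa (k+1) x v - graphonIter Wb (k+1) x v)
        = p2 (fun v => (graphonOp Wa (graphonIter Wa k x) v - graphonOp Wa (graphonIter Wb k x) v)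
          + (graphonOp Wa (graphonIter Wb k x) v - graphonOp Wb (graphonIter Wb k x) v)) := by
          simp only [hsplit]
    _ ≤ p2 (fun v => graphonOp Wa (graphonIter Wa k x) v - graphonOp Wa (graphonIter Wb k x) v)
          + p2 (fun v => graphonOp Wa (graphonIter Wb k x) v - graphonOp Wb (graphonIter Wb k x) v) := by
          apply p2_add_le
          · rw [hlin]
            exact mem2_of_top (graphonOp_memTop hWam hWab hmemdiff)
          · exact (mem2_of_top (graphonOp_memTop hWam hWab hmemb)).sub
              (mem2_of_top (graphonOp_memTop hWbm hWbb hmemb))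
    _ ≤ k * graphonOpNormSub Wa Wb * p2 x + graphonOpNormSub Wa Wb * p2 x := by
          apply add_le_add
          · rw [hlin]
            exact le_trans (graphonOp_p2_le hWam hWab hmemdiff) ih
          · exact le_trans (opSub_apply hWam hWab hWbm hWbb hmemb)
              (mul_le_mul_of_nonneg_left (iter_p2_le hWbm hWbb hx k)
                (opNormSub_nonneg Wa Wb hWam hWab hWbm hWbb))
    _ = (k+1 : ℕ) * graphonOpNormSub Wa Wb * p2 x := by push_cast; ring

lemma iter_sub {W : ℝ → ℝ → ℝ} (hWm : Measurable (Function.uncurry W))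
    (hWb : ∀ u v, |W u v| ≤ 1) {x y : ℝ → ℝ} (hx : MemLp x 2 μI) (hy : MemLp y 2 μI) (k : ℕ) :
    graphonIter W k (fun u => x u - y u)
      = fun v => graphonIter W k x v - graphonIter W k y v := by
  induction k with
  | zero => rfl
  | succ k ih =>
    have ha : ∀ z : ℝ → ℝ, graphonIter W (k+1) z = graphonOp W (graphonIter W k z) :=
      fun z => Function.iterate_succ_apply' _ _ _
    rw [ha, ha, ha, ih,
      graphonOp_sub W (int_of_mem2 (iter_mem2 hWm hWb hx k))
        (int_of_mem2 (iter_mem2 hWm hWb hy k)) hWm hWb]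

lemma p2_sum_le {ι : Type*} (s : Finset ι) (A : ι → ℝ → ℝ)
    (hA : ∀ i ∈ s, MemLp (A i) 2 μI) :
    p2 (fun u => ∑ i ∈ s, A i u) ≤ ∑ i ∈ s, p2 (A i) := by
  classical
  induction s using Finset.cons_induction with
  | empty =>
    simp only [Finset.sum_empty]
    have : p2 (fun _ : ℝ => (0:ℝ)) = 0 := by unfold p2; rw [eLpNorm_zero']; simp
    rw [this]
  | cons a s ha ih =>
    simp only [Finset.sum_cons]
    have h1 : MemLp (A a) 2 μI := hA a (Finset.mem_cons_self a s)
    have h2 : ∀ i ∈ s, MemLp (A i) 2 μI := fun i hi => hA i (Finset.mem_cons_of_mem hi)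
    have hsum : MemLp (fun u => ∑ i ∈ s, A i u) 2 μI := by
      have := memLp_finset_sum (μ := μI) (p := 2) s (f := A) h2
      simpa using this
    exact le_trans (p2_add_le h1 hsum) (by linarith [ih h2])

lemma sqrt_sum_sq_eq_norm {F : ℕ} (a : Fin F → ℝ) :
    Real.sqrt (∑ f, a f ^ 2) = ‖(WithLp.equiv 2 (Fin F → ℝ)).symm a‖ := by
  rw [EuclideanSpace.norm_eq]
  congr 1
  refine Finset.sum_congr rfl fun f _ => ?_
  simp [Real.norm_eq_abs, sq_abs]

lemma sqrt_sum_sq_mono {F : ℕ} {a b : Fin F → ℝ} (h : ∀ f, |a f| ≤ b f) :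
    Real.sqrt (∑ f, a f ^ 2) ≤ Real.sqrt (∑ f, b f ^ 2) := by
  apply Real.sqrt_le_sqrt
  apply Finset.sum_le_sum
  intro f _
  have := h f
  nlinarith [abs_nonneg (a f), neg_abs_le (a f), le_abs_self (a f)]

lemma sqrt_sum_sq_add {F : ℕ} (a b : Fin F → ℝ) :
    Real.sqrt (∑ f, (a f + b f) ^ 2) ≤ Real.sqrt (∑ f, a f ^ 2) + Real.sqrt (∑ f, b f ^ 2) := by
  rw [sqrt_sum_sq_eq_norm, sqrt_sum_sq_eq_norm, sqrt_sum_sq_eq_norm]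
  have : (WithLp.equiv 2 (Fin F → ℝ)).symm (a + b)
      = (WithLp.equiv 2 (Fin F → ℝ)).symm a + (WithLp.equiv 2 (Fin F → ℝ)).symm b := by
    simp
  calc ‖(WithLp.equiv 2 (Fin F → ℝ)).symm fun f => a f + b f‖
      = ‖(WithLp.equiv 2 (Fin F → ℝ)).symm a + (WithLp.equiv 2 (Fin F → ℝ)).symm b‖ := by
        rw [← this]; rfl
  _ ≤ _ := norm_add_le _ _

lemma sqrt_sum_sq_le_of_le {F : ℕ} {a : Fin F → ℝ} {M : ℝ} (h : ∀ f, |a f| ≤ M) :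
    Real.sqrt (∑ f, a f ^ 2) ≤ Real.sqrt F * M := by
  cases Nat.eq_zero_or_pos F with
  | inl h0 =>
    subst h0
    simp
  | inr hpos =>
  have hM : 0 ≤ M := le_trans (abs_nonneg _) (h ⟨0, hpos⟩)
  calc Real.sqrt (∑ f, a f ^ 2) ≤ Real.sqrt (∑ _f : Fin F, M ^ 2) := by
        apply Real.sqrt_le_sqrt
        apply Finset.sum_le_sum
        intro f _
        nlinarith [h f, abs_nonneg (a f), neg_abs_le (a f), le_abs_self (a f)]
  _ = Real.sqrt (F * M ^ 2) := by rw [Finset.sum_const, Finset.card_univ, Fintype.card_fin,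
        nsmul_eq_mul]
  _ = Real.sqrt F * M := by
        rw [Real.sqrt_mul (Nat.cast_nonneg F), Real.sqrt_sq hM]

lemma sum_le_sqrt_card {F : ℕ} {d : Fin F → ℝ} (hd : ∀ f, 0 ≤ d f) :
    ∑ f, d f ≤ Real.sqrt F * Real.sqrt (∑ f, d f ^ 2) := by
  have h := Finset.sum_mul_sq_le_sq_mul_sq Finset.univ (fun _ : Fin F => (1:ℝ)) d
  simp only [one_mul, one_pow, Finset.sum_const, Finset.card_univ, Fintype.card_fin,
    nsmul_eq_mul, mul_one] at h
  have h1 : ∑ f, d f = Real.sqrt ((∑ f, d f) ^ 2) :=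
    (Real.sqrt_sq (Finset.sum_nonneg fun f _ => hd f)).symm
  rw [h1, ← Real.sqrt_mul (Nat.cast_nonneg F)]
  exact Real.sqrt_le_sqrt h

lemma rho_cont {ρ : ℝ → ℝ} (hρ : NormalizedLipschitz ρ) : Continuous ρ := by
  have : LipschitzWith 1 ρ := by
    apply LipschitzWith.of_dist_le_mul
    intro x y
    rw [Real.dist_eq, Real.dist_eq]
    simpa using hρ.1 x y
  exact this.continuous

lemma rho_abs_le {ρ : ℝ → ℝ} (hρ : NormalizedLipschitz ρ) (s : ℝ) : |ρ s| ≤ |s| := by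
  have := hρ.1 s 0
  rw [hρ.2] at this
  simpa using this

lemma p2_mono {A B : ℝ → ℝ} (hB : MemLp B 2 μI) (h : ∀ u, |A u| ≤ |B u|) :
    p2 A ≤ p2 B := by
  unfold p2
  apply ENNReal.toReal_mono hB.2.ne
  exact eLpNorm_mono h

lemma p2_dsum_le {F K : ℕ} (coef : Fin F → Fin K → ℝ) (B : Fin F → Fin K → ℝ → ℝ)
    (hB : ∀ g k, MemLp (B g k) 2 μI) :
    p2 (fun u => ∑ g, ∑ k, coef g k * B g k u) ≤ ∑ g, ∑ k, |coef g k| * p2 (B g k) := by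
  have hin : ∀ g : Fin F, MemLp (fun u => ∑ k, coef g k * B g k u) 2 μI := by
    intro g
    have := memLp_finset_sum (μ := μI) (p := 2) Finset.univ
      (f := fun k u => coef g k * B g k u) (fun k _ => (hB g k).const_mul _)
    simpa using this
  calc p2 (fun u => ∑ g, ∑ k, coef g k * B g k u)
      ≤ ∑ g, p2 (fun u => ∑ k, coef g k * B g k u) :=
        p2_sum_le Finset.univ _ (fun g _ => hin g)
  _ ≤ ∑ g, ∑ k, p2 (fun u => coef g k * B g k u) :=
        Finset.sum_le_sum fun g _ =>
          p2_sum_le Finset.univ _ (fun k _ => (hB g k).const_mul _)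
  _ = ∑ g, ∑ k, |coef g k| * p2 (B g k) := by
        refine Finset.sum_congr rfl fun g _ => Finset.sum_congr rfl fun k _ => ?_
        exact p2_const_mul _ _

section layer
variable {F K : ℕ} {W : ℝ → ℝ → ℝ} {ρ : ℝ → ℝ}
  {m : Fin F → Fin F → Fin K → ℝ} {c : ℝ}

lemma layerS_mem2 (hWm : Measurable (Function.uncurry W)) (hWb : ∀ u v, |W u v| ≤ 1)
    {X : Fin F → ℝ → ℝ} (hX : ∀ g, MemLp (X g) 2 μI) (f : Fin F) :
    MemLp (fun u => ∑ g, ∑ k : Fin K, m f g k * graphonIter W (k:ℕ) (X g) u) 2 μI := by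
  have h1 : ∀ g : Fin F, MemLp (fun u => ∑ k : Fin K, m f g k * graphonIter W (k:ℕ) (X g) u) 2 μI := by
    intro g
    have := memLp_finset_sum (μ := μI) (p := 2) Finset.univ
      (f := fun (k : Fin K) u => m f g k * graphonIter W (k:ℕ) (X g) u)
      (fun k _ => (iter_mem2 hWm hWb (hX g) k).const_mul _)
    simpa using this
  have := memLp_finset_sum (μ := μI) (p := 2) Finset.univ
    (f := fun (g : Fin F) u => ∑ k : Fin K, m f g k * graphonIter W (k:ℕ) (X g) u)
    (fun g _ => h1 g)
  simpa using this

lemma layer_mem2 (hWm : Measurable (Function.uncurry W)) (hWb : ∀ u v, |W u v| ≤ 1)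
    (hρ : NormalizedLipschitz ρ)
    {X : Fin F → ℝ → ℝ} (hX : ∀ g, MemLp (X g) 2 μI) (f : Fin F) :
    MemLp (gnnLayer F K W ρ m X f) 2 μI := by
  have hS := layerS_mem2 (m := m) hWm hWb hX f
  refine MemLp.of_le hS ?_ ?_
  · exact (rho_cont hρ).comp_aestronglyMeasurable hS.aestronglyMeasurable
  · exact Eventually.of_forall fun u => rho_abs_le hρ _

lemma layer_comp_growth (hWm : Measurable (Function.uncurry W)) (hWb : ∀ u v, |W u v| ≤ 1)
    (hρ : NormalizedLipschitz ρ) (hm : ∀ f g k, |m f g k| ≤ c)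
    {X : Fin F → ℝ → ℝ} (hX : ∀ g, MemLp (X g) 2 μI)
    (hc : 0 ≤ c) (f : Fin F) :
    p2 (gnnLayer F K W ρ m X f) ≤ c * K * ∑ g, p2 (X g) := by
  have hS := layerS_mem2 (m := m) hWm hWb hX f
  have h1 : p2 (gnnLayer F K W ρ m X f)
      ≤ p2 (fun u => ∑ g, ∑ k : Fin K, m f g k * graphonIter W (k:ℕ) (X g) u) :=
    p2_mono hS fun u => rho_abs_le hρ _
  refine h1.trans ?_
  have h2 := p2_dsum_le (fun g k => m f g k)
    (fun g (k : Fin K) => graphonIter W (k:ℕ) (X g)) (fun g k => iter_mem2 hWm hWb (hX g) _)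
  refine h2.trans ?_
  calc ∑ g, ∑ k : Fin K, |m f g k| * p2 (graphonIter W (k:ℕ) (X g))
      ≤ ∑ g, ∑ _k : Fin K, c * p2 (X g) := by
        refine Finset.sum_le_sum fun g _ => Finset.sum_le_sum fun k _ => ?_
        exact mul_le_mul (hm f g k) (iter_p2_le hWm hWb (hX g) _) (p2_nonneg _) hc
  _ = c * K * ∑ g, p2 (X g) := by
        rw [Finset.mul_sum]
        refine Finset.sum_congr rfl fun g _ => ?_
        rw [Finset.sum_const, Finset.card_univ, Fintype.card_fin, nsmul_eq_mul]
        ring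

lemma layer_comp_lip (hWm : Measurable (Function.uncurry W)) (hWb : ∀ u v, |W u v| ≤ 1)
    (hρ : NormalizedLipschitz ρ) (hm : ∀ f g k, |m f g k| ≤ c)
    {X X' : Fin F → ℝ → ℝ} (hX : ∀ g, MemLp (X g) 2 μI)
    (hX' : ∀ g, MemLp (X' g) 2 μI) (hc : 0 ≤ c) (f : Fin F) :
    p2 (fun u => gnnLayer F K W ρ m X f u - gnnLayer F K W ρ m X' f u)
      ≤ c * K * ∑ g, p2 (fun u => X g u - X' g u) := by
  have hmem : ∀ (g : Fin F) (k : Fin K),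
      MemLp (fun v => graphonIter W (k:ℕ) (X g) v - graphonIter W (k:ℕ) (X' g) v) 2 μI :=
    fun g k => (iter_mem2 hWm hWb (hX g) _).sub (iter_mem2 hWm hWb (hX' g) _)
  have hSd : MemLp (fun u => ∑ g, ∑ k : Fin K,
      m f g k * (graphonIter W (k:ℕ) (X g) u - graphonIter W (k:ℕ) (X' g) u)) 2 μI := by
    have h1 : ∀ g : Fin F, MemLp (fun u => ∑ k : Fin K,
        m f g k * (graphonIter W (k:ℕ) (X g) u - graphonIter W (k:ℕ) (X' g) u)) 2 μI := by
      intro g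
      have := memLp_finset_sum (μ := μI) (p := 2) Finset.univ
        (f := fun (k : Fin K) u =>
          m f g k * (graphonIter W (k:ℕ) (X g) u - graphonIter W (k:ℕ) (X' g) u))
        (fun k _ => (hmem g k).const_mul _)
      simpa using this
    have := memLp_finset_sum (μ := μI) (p := 2) Finset.univ
      (f := fun (g : Fin F) u => ∑ k : Fin K,
        m f g k * (graphonIter W (k:ℕ) (X g) u - graphonIter W (k:ℕ) (X' g) u))
      (fun g _ => h1 g)
    simpa using this
  have h1 : p2 (fun u => gnnLayer F K W ρ m X f u - gnnLayer F K W ρ m X' f u)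
      ≤ p2 (fun u => ∑ g, ∑ k : Fin K,
          m f g k * (graphonIter W (k:ℕ) (X g) u - graphonIter W (k:ℕ) (X' g) u)) := by
    refine p2_mono hSd fun u => ?_
    have hd := hρ.1 (∑ g, ∑ k : Fin K, m f g k * graphonIter W (k:ℕ) (X g) u)
      (∑ g, ∑ k : Fin K, m f g k * graphonIter W (k:ℕ) (X' g) u)
    refine le_trans hd ?_
    have heq : (∑ g, ∑ k : Fin K, m f g k * graphonIter W (k:ℕ) (X g) u)
        - (∑ g, ∑ k : Fin K, m f g k * graphonIter W (k:ℕ) (X' g) u)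
        = ∑ g, ∑ k : Fin K,
            m f g k * (graphonIter W (k:ℕ) (X g) u - graphonIter W (k:ℕ) (X' g) u) := by
      rw [← Finset.sum_sub_distrib]
      refine Finset.sum_congr rfl fun g _ => ?_
      rw [← Finset.sum_sub_distrib]
      exact Finset.sum_congr rfl fun k _ => by ring
    rw [heq]
  refine h1.trans ?_
  have h2 := p2_dsum_le (fun g k => m f g k)
    (fun g (k : Fin K) => fun v => graphonIter W (k:ℕ) (X g) v - graphonIter W (k:ℕ) (X' g) v)
    hmem
  refine h2.trans ?_
  calc ∑ g, ∑ k : Fin K, |m f g k|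
        * p2 (fun v => graphonIter W (k:ℕ) (X g) v - graphonIter W (k:ℕ) (X' g) v)
      ≤ ∑ g, ∑ _k : Fin K, c * p2 (fun u => X g u - X' g u) := by
        refine Finset.sum_le_sum fun g _ => Finset.sum_le_sum fun k _ => ?_
        have hrw : (fun v => graphonIter W (k:ℕ) (X g) v - graphonIter W (k:ℕ) (X' g) v)
            = graphonIter W (k:ℕ) (fun u => X g u - X' g u) :=
          (iter_sub hWm hWb (hX g) (hX' g) _).symm
        rw [hrw]
        exact mul_le_mul (hm f g k) (iter_p2_le hWm hWb ((hX g).sub (hX' g)) _)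
          (p2_nonneg _) hc
  _ = c * K * ∑ g, p2 (fun u => X g u - X' g u) := by
        rw [Finset.mul_sum]
        refine Finset.sum_congr rfl fun g _ => ?_
        rw [Finset.sum_const, Finset.card_univ, Fintype.card_fin, nsmul_eq_mul]
        ring

lemma layer_comp_pert {Wa Wb : ℝ → ℝ → ℝ}
    (hWam : Measurable (Function.uncurry Wa)) (hWab : ∀ u v, |Wa u v| ≤ 1)
    (hWbm : Measurable (Function.uncurry Wb)) (hWbb : ∀ u v, |Wb u v| ≤ 1)
    (hρ : NormalizedLipschitz ρ) (hm : ∀ f g k, |m f g k| ≤ c)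
    {X : Fin F → ℝ → ℝ} (hX : ∀ g, MemLp (X g) 2 μI) (hc : 0 ≤ c) (f : Fin F) :
    p2 (fun u => gnnLayer F K Wa ρ m X f u - gnnLayer F K Wb ρ m X f u)
      ≤ c * K * K * graphonOpNormSub Wa Wb * ∑ g, p2 (X g) := by
  have hmem : ∀ (g : Fin F) (k : Fin K),
      MemLp (fun v => graphonIter Wa (k:ℕ) (X g) v - graphonIter Wb (k:ℕ) (X g) v) 2 μI :=
    fun g k => (iter_mem2 hWam hWab (hX g) _).sub (iter_mem2 hWbm hWbb (hX g) _)
  have hSd : MemLp (fun u => ∑ g, ∑ k : Fin K,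
      m f g k * (graphonIter Wa (k:ℕ) (X g) u - graphonIter Wb (k:ℕ) (X g) u)) 2 μI := by
    have h1 : ∀ g : Fin F, MemLp (fun u => ∑ k : Fin K,
        m f g k * (graphonIter Wa (k:ℕ) (X g) u - graphonIter Wb (k:ℕ) (X g) u)) 2 μI := by
      intro g
      have := memLp_finset_sum (μ := μI) (p := 2) Finset.univ
        (f := fun (k : Fin K) u =>
          m f g k * (graphonIter Wa (k:ℕ) (X g) u - graphonIter Wb (k:ℕ) (X g) u))
        (fun k _ => (hmem g k).const_mul _)
      simpa using this
    have := memLp_finset_sum (μ := μI) (p := 2) Finset.univ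
      (f := fun (g : Fin F) u => ∑ k : Fin K,
        m f g k * (graphonIter Wa (k:ℕ) (X g) u - graphonIter Wb (k:ℕ) (X g) u))
      (fun g _ => h1 g)
    simpa using this
  have h1 : p2 (fun u => gnnLayer F K Wa ρ m X f u - gnnLayer F K Wb ρ m X f u)
      ≤ p2 (fun u => ∑ g, ∑ k : Fin K,
          m f g k * (graphonIter Wa (k:ℕ) (X g) u - graphonIter Wb (k:ℕ) (X g) u)) := by
    refine p2_mono hSd fun u => ?_
    have hd := hρ.1 (∑ g, ∑ k : Fin K, m f g k * graphonIter Wa (k:ℕ) (X g) u)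
      (∑ g, ∑ k : Fin K, m f g k * graphonIter Wb (k:ℕ) (X g) u)
    refine le_trans hd ?_
    have heq : (∑ g, ∑ k : Fin K, m f g k * graphonIter Wa (k:ℕ) (X g) u)
        - (∑ g, ∑ k : Fin K, m f g k * graphonIter Wb (k:ℕ) (X g) u)
        = ∑ g, ∑ k : Fin K,
            m f g k * (graphonIter Wa (k:ℕ) (X g) u - graphonIter Wb (k:ℕ) (X g) u) := by
      rw [← Finset.sum_sub_distrib]
      refine Finset.sum_congr rfl fun g _ => ?_
      rw [← Finset.sum_sub_distrib]
      exact Finset.sum_congr rfl fun k _ => by ring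
    rw [heq]
  refine h1.trans ?_
  have h2 := p2_dsum_le (fun g k => m f g k)
    (fun g (k : Fin K) => fun v => graphonIter Wa (k:ℕ) (X g) v - graphonIter Wb (k:ℕ) (X g) v)
    hmem
  refine h2.trans ?_
  have hop := opNormSub_nonneg Wa Wb hWam hWab hWbm hWbb
  calc ∑ g, ∑ k : Fin K, |m f g k|
        * p2 (fun v => graphonIter Wa (k:ℕ) (X g) v - graphonIter Wb (k:ℕ) (X g) v)
      ≤ ∑ g, ∑ _k : Fin K, c * (K * graphonOpNormSub Wa Wb * p2 (X g)) := by
        refine Finset.sum_le_sum fun g _ => Finset.sum_le_sum fun k _ => ?_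
        have hk := iter_diff_le hWam hWab hWbm hWbb (hX g) (k:ℕ)
        have hkK : ((k:ℕ) : ℝ) ≤ (K : ℝ) := by
          exact_mod_cast le_of_lt k.2
        have : p2 (fun v => graphonIter Wa (k:ℕ) (X g) v - graphonIter Wb (k:ℕ) (X g) v)
            ≤ K * graphonOpNormSub Wa Wb * p2 (X g) := by
          refine hk.trans ?_
          apply mul_le_mul_of_nonneg_right _ (p2_nonneg _)
          exact mul_le_mul_of_nonneg_right hkK hop
        exact mul_le_mul (hm f g k) this (p2_nonneg _) hc
  _ = c * K * K * graphonOpNormSub Wa Wb * ∑ g, p2 (X g) := by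
        rw [Finset.mul_sum]
        refine Finset.sum_congr rfl fun g _ => ?_
        rw [Finset.sum_const, Finset.card_univ, Fintype.card_fin, nsmul_eq_mul]
        ring

end layer

lemma vec_eq {F : ℕ} (A : Fin F → ℝ → ℝ) :
    vecLpNorm F 2 A = Real.sqrt (∑ f, p2 (A f) ^ 2) := rfl

lemma vec_nonneg {F : ℕ} (A : Fin F → ℝ → ℝ) : 0 ≤ vecLpNorm F 2 A := Real.sqrt_nonneg _

lemma vec_congr {F : ℕ} {A B : Fin F → ℝ → ℝ} (h : ∀ f, A f =ᵐ[μI] B f) :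
    vecLpNorm F 2 A = vecLpNorm F 2 B := by
  rw [vec_eq, vec_eq]
  congr 1
  exact Finset.sum_congr rfl fun f _ => by rw [p2_congr (h f)]

lemma vec_le_of_comp_le {F : ℕ} {A : Fin F → ℝ → ℝ} {M : ℝ} (h : ∀ f, p2 (A f) ≤ M) :
    vecLpNorm F 2 A ≤ Real.sqrt F * M := by
  rw [vec_eq]
  exact sqrt_sum_sq_le_of_le fun f => by rw [abs_of_nonneg (p2_nonneg _)]; exact h f

lemma sum_p2_le_vec {F : ℕ} (A : Fin F → ℝ → ℝ) :
    ∑ g, p2 (A g) ≤ Real.sqrt F * vecLpNorm F 2 A := by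
  rw [vec_eq]
  exact sum_le_sqrt_card fun f => p2_nonneg _

lemma comp_le_vec {F : ℕ} (A : Fin F → ℝ → ℝ) (f : Fin F) :
    p2 (A f) ≤ vecLpNorm F 2 A := by
  rw [vec_eq]
  have h1 : p2 (A f) ^ 2 ≤ ∑ g, p2 (A g) ^ 2 :=
    Finset.single_le_sum (f := fun g => p2 (A g) ^ 2) (fun g _ => sq_nonneg _) (Finset.mem_univ f)
  calc p2 (A f) = Real.sqrt (p2 (A f) ^ 2) := (Real.sqrt_sq (p2_nonneg _)).symm
  _ ≤ _ := Real.sqrt_le_sqrt h1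

lemma vec_triangle {F : ℕ} {A B C : Fin F → ℝ → ℝ}
    (hA : ∀ f, MemLp (A f) 2 μI) (hB : ∀ f, MemLp (B f) 2 μI) (hC : ∀ f, MemLp (C f) 2 μI) :
    vecLpNorm F 2 (fun f u => A f u - C f u)
      ≤ vecLpNorm F 2 (fun f u => A f u - B f u) + vecLpNorm F 2 (fun f u => B f u - C f u) := by
  rw [vec_eq, vec_eq, vec_eq]
  refine le_trans ?_ (sqrt_sum_sq_add (fun f => p2 (fun u => A f u - B f u))
    (fun f => p2 (fun u => B f u - C f u)))
  apply Real.sqrt_le_sqrt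
  apply Finset.sum_le_sum
  intro f _
  have htri : p2 (fun u => A f u - C f u)
      ≤ p2 (fun u => A f u - B f u) + p2 (fun u => B f u - C f u) := by
    have heq : (fun u => A f u - C f u)
        = fun u => (A f u - B f u) + (B f u - C f u) := by funext u; ring
    rw [heq]
    exact p2_add_le ((hA f).sub (hB f)) ((hB f).sub (hC f))
  have h0 : 0 ≤ p2 (fun u => A f u - C f u) := p2_nonneg _
  nlinarith [p2_nonneg (fun u => A f u - B f u), p2_nonneg (fun u => B f u - C f u)]

section vecLayer
variable {F K : ℕ} {W : ℝ → ℝ → ℝ} {ρ : ℝ → ℝ}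
  {m : Fin F → Fin F → Fin K → ℝ} {c : ℝ}

lemma sqrtF_mul_sqrtF {F : ℕ} : Real.sqrt F * Real.sqrt F = (F : ℝ) :=
  Real.mul_self_sqrt (Nat.cast_nonneg F)

lemma vl_growth (hWm : Measurable (Function.uncurry W)) (hWb : ∀ u v, |W u v| ≤ 1)
    (hρ : NormalizedLipschitz ρ) (hm : ∀ f g k, |m f g k| ≤ c)
    {X : Fin F → ℝ → ℝ} (hX : ∀ g, MemLp (X g) 2 μI) (hc : 0 ≤ c) :
    vecLpNorm F 2 (gnnLayer F K W ρ m X) ≤ (F * K * c) * vecLpNorm F 2 X := by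
  have h1 : ∀ f, p2 (gnnLayer F K W ρ m X f) ≤ c * K * ∑ g, p2 (X g) :=
    fun f => layer_comp_growth hWm hWb hρ hm hX hc f
  refine (vec_le_of_comp_le h1).trans ?_
  have h2 : (c * (K:ℝ)) * ∑ g, p2 (X g) ≤ (c * K) * (Real.sqrt F * vecLpNorm F 2 X) := by
    apply mul_le_mul_of_nonneg_left (sum_p2_le_vec X)
    positivity
  calc Real.sqrt F * (c * K * ∑ g, p2 (X g))
      ≤ Real.sqrt F * ((c * K) * (Real.sqrt F * vecLpNorm F 2 X)) := by
        apply mul_le_mul_of_nonneg_left h2 (Real.sqrt_nonneg _)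
  _ = (Real.sqrt F * Real.sqrt F) * (K * c) * vecLpNorm F 2 X := by ring
  _ = (F * K * c) * vecLpNorm F 2 X := by rw [sqrtF_mul_sqrtF]; ring_nf

lemma vl_lip (hWm : Measurable (Function.uncurry W)) (hWb : ∀ u v, |W u v| ≤ 1)
    (hρ : NormalizedLipschitz ρ) (hm : ∀ f g k, |m f g k| ≤ c)
    {X X' : Fin F → ℝ → ℝ} (hX : ∀ g, MemLp (X g) 2 μI)
    (hX' : ∀ g, MemLp (X' g) 2 μI) (hc : 0 ≤ c) :
    vecLpNorm F 2 (fun f u => gnnLayer F K W ρ m X f u - gnnLayer F K W ρ m X' f u)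
      ≤ (F * K * c) * vecLpNorm F 2 (fun f u => X f u - X' f u) := by
  have h1 : ∀ f, p2 (fun u => gnnLayer F K W ρ m X f u - gnnLayer F K W ρ m X' f u)
      ≤ c * K * ∑ g, p2 (fun u => X g u - X' g u) :=
    fun f => layer_comp_lip hWm hWb hρ hm hX hX' hc f
  refine (vec_le_of_comp_le h1).trans ?_
  have h2 : (c * (K:ℝ)) * ∑ g, p2 (fun u => X g u - X' g u)
      ≤ (c * K) * (Real.sqrt F * vecLpNorm F 2 (fun f u => X f u - X' f u)) := by
    apply mul_le_mul_of_nonneg_left (sum_p2_le_vec _)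
    positivity
  calc Real.sqrt F * (c * K * ∑ g, p2 (fun u => X g u - X' g u))
      ≤ Real.sqrt F * ((c * K) * (Real.sqrt F
          * vecLpNorm F 2 (fun f u => X f u - X' f u))) := by
        apply mul_le_mul_of_nonneg_left h2 (Real.sqrt_nonneg _)
  _ = (Real.sqrt F * Real.sqrt F) * (K * c) * vecLpNorm F 2 (fun f u => X f u - X' f u) := by
        ring
  _ = _ := by rw [sqrtF_mul_sqrtF]; ring_nf

lemma vl_pert {Wa Wb : ℝ → ℝ → ℝ}
    (hWam : Measurable (Function.uncurry Wa)) (hWab : ∀ u v, |Wa u v| ≤ 1)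
    (hWbm : Measurable (Function.uncurry Wb)) (hWbb : ∀ u v, |Wb u v| ≤ 1)
    (hρ : NormalizedLipschitz ρ) (hm : ∀ f g k, |m f g k| ≤ c)
    {X : Fin F → ℝ → ℝ} (hX : ∀ g, MemLp (X g) 2 μI) (hc : 0 ≤ c) :
    vecLpNorm F 2 (fun f u => gnnLayer F K Wa ρ m X f u - gnnLayer F K Wb ρ m X f u)
      ≤ (F * K * c) * K * graphonOpNormSub Wa Wb * vecLpNorm F 2 X := by
  have hop := opNormSub_nonneg Wa Wb hWam hWab hWbm hWbb
  have h1 : ∀ f, p2 (fun u => gnnLayer F K Wa ρ m X f u - gnnLayer F K Wb ρ m X f u)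
      ≤ c * K * K * graphonOpNormSub Wa Wb * ∑ g, p2 (X g) :=
    fun f => layer_comp_pert hWam hWab hWbm hWbb hρ hm hX hc f
  refine (vec_le_of_comp_le h1).trans ?_
  have h2 : (c * (K:ℝ) * K * graphonOpNormSub Wa Wb) * ∑ g, p2 (X g)
      ≤ (c * K * K * graphonOpNormSub Wa Wb) * (Real.sqrt F * vecLpNorm F 2 X) := by
    apply mul_le_mul_of_nonneg_left (sum_p2_le_vec X)
    positivity
  calc Real.sqrt F * (c * K * K * graphonOpNormSub Wa Wb * ∑ g, p2 (X g))
      ≤ Real.sqrt F * ((c * K * K * graphonOpNormSub Wa Wb)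
          * (Real.sqrt F * vecLpNorm F 2 X)) := by
        apply mul_le_mul_of_nonneg_left h2 (Real.sqrt_nonneg _)
  _ = (Real.sqrt F * Real.sqrt F) * (c * K * K * graphonOpNormSub Wa Wb) * vecLpNorm F 2 X := by
        ring
  _ = _ := by rw [sqrtF_mul_sqrtF]; ring_nf

end vecLayer

section foldl
variable {F K : ℕ} {W : ℝ → ℝ → ℝ} {ρ : ℝ → ℝ} {c : ℝ}

lemma foldl_mem2 (hWm : Measurable (Function.uncurry W)) (hWb : ∀ u v, |W u v| ≤ 1)
    (hρ : NormalizedLipschitz ρ) (hs : List (Fin F → Fin F → Fin K → ℝ)) :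
    ∀ X : Fin F → ℝ → ℝ, (∀ g, MemLp (X g) 2 μI) →
      ∀ f, MemLp ((hs.foldl (fun Y hl => gnnLayer F K W ρ hl Y) X) f) 2 μI := by
  induction hs with
  | nil => intro X hX f; exact hX f
  | cons m hs ih =>
    intro X hX f
    simp only [List.foldl_cons]
    exact ih _ (fun g => layer_mem2 hWm hWb hρ hX g) f

lemma foldl_growth (hWm : Measurable (Function.uncurry W)) (hWb : ∀ u v, |W u v| ≤ 1)
    (hρ : NormalizedLipschitz ρ) (hc : 0 ≤ c) (hs : List (Fin F → Fin F → Fin K → ℝ))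
    (hbd : ∀ m ∈ hs, ∀ f g k, |m f g k| ≤ c) :
    ∀ X : Fin F → ℝ → ℝ, (∀ g, MemLp (X g) 2 μI) →
      vecLpNorm F 2 (hs.foldl (fun Y hl => gnnLayer F K W ρ hl Y) X)
        ≤ ((F:ℝ) * K * c) ^ hs.length * vecLpNorm F 2 X := by
  induction hs with
  | nil => intro X hX; simp
  | cons m hs ih =>
    intro X hX
    simp only [List.foldl_cons, List.length_cons]
    have hm : ∀ f g k, |m f g k| ≤ c := hbd m (List.mem_cons_self)
    have hbd' : ∀ m' ∈ hs, ∀ f g k, |m' f g k| ≤ c :=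
      fun m' hm' => hbd m' (List.mem_cons_of_mem _ hm')
    have h1 := ih hbd' (gnnLayer F K W ρ m X) (fun g => layer_mem2 hWm hWb hρ hX g)
    refine h1.trans ?_
    have h2 := vl_growth hWm hWb hρ hm hX hc
    calc ((F:ℝ) * K * c) ^ hs.length * vecLpNorm F 2 (gnnLayer F K W ρ m X)
        ≤ ((F:ℝ) * K * c) ^ hs.length * (((F:ℝ) * K * c) * vecLpNorm F 2 X) := by
          apply mul_le_mul_of_nonneg_left h2
          positivity
    _ = ((F:ℝ) * K * c) ^ (hs.length + 1) * vecLpNorm F 2 X := by ring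

lemma foldl_lip (hWm : Measurable (Function.uncurry W)) (hWb : ∀ u v, |W u v| ≤ 1)
    (hρ : NormalizedLipschitz ρ) (hc : 0 ≤ c) (hs : List (Fin F → Fin F → Fin K → ℝ))
    (hbd : ∀ m ∈ hs, ∀ f g k, |m f g k| ≤ c) :
    ∀ X X' : Fin F → ℝ → ℝ, (∀ g, MemLp (X g) 2 μI) → (∀ g, MemLp (X' g) 2 μI) →
      vecLpNorm F 2 (fun f u => (hs.foldl (fun Y hl => gnnLayer F K W ρ hl Y) X) f u
          - (hs.foldl (fun Y hl => gnnLayer F K W ρ hl Y) X') f u)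
        ≤ ((F:ℝ) * K * c) ^ hs.length * vecLpNorm F 2 (fun f u => X f u - X' f u) := by
  induction hs with
  | nil => intro X X' hX hX'; simp
  | cons m hs ih =>
    intro X X' hX hX'
    simp only [List.foldl_cons, List.length_cons]
    have hm : ∀ f g k, |m f g k| ≤ c := hbd m (List.mem_cons_self)
    have hbd' : ∀ m' ∈ hs, ∀ f g k, |m' f g k| ≤ c :=
      fun m' hm' => hbd m' (List.mem_cons_of_mem _ hm')
    have h1 := ih hbd' (gnnLayer F K W ρ m X) (gnnLayer F K W ρ m X')
      (fun g => layer_mem2 hWm hWb hρ hX g) (fun g => layer_mem2 hWm hWb hρ hX' g)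
    refine h1.trans ?_
    have h2 := vl_lip hWm hWb hρ hm hX hX' hc
    calc ((F:ℝ) * K * c) ^ hs.length
          * vecLpNorm F 2 (fun f u => gnnLayer F K W ρ m X f u - gnnLayer F K W ρ m X' f u)
        ≤ ((F:ℝ) * K * c) ^ hs.length
          * (((F:ℝ) * K * c) * vecLpNorm F 2 (fun f u => X f u - X' f u)) := by
          apply mul_le_mul_of_nonneg_left h2
          positivity
    _ = _ := by ring

lemma foldl_pert {Wa Wb : ℝ → ℝ → ℝ}
    (hWam : Measurable (Function.uncurry Wa)) (hWab : ∀ u v, |Wa u v| ≤ 1)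
    (hWbm : Measurable (Function.uncurry Wb)) (hWbb : ∀ u v, |Wb u v| ≤ 1)
    (hρ : NormalizedLipschitz ρ) (hc : 0 ≤ c) (hs : List (Fin F → Fin F → Fin K → ℝ))
    (hbd : ∀ m ∈ hs, ∀ f g k, |m f g k| ≤ c) :
    ∀ X : Fin F → ℝ → ℝ, (∀ g, MemLp (X g) 2 μI) →
      vecLpNorm F 2 (fun f u => (hs.foldl (fun Y hl => gnnLayer F K Wa ρ hl Y) X) f u
          - (hs.foldl (fun Y hl => gnnLayer F K Wb ρ hl Y) X) f u)
        ≤ hs.length * K * ((F:ℝ) * K * c) ^ hs.length * graphonOpNormSub Wa Wb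
            * vecLpNorm F 2 X := by
  have hop := opNormSub_nonneg Wa Wb hWam hWab hWbm hWbb
  induction hs with
  | nil =>
    intro X hX
    simp only [List.foldl_nil, List.length_nil, sub_self]
    have h0 : vecLpNorm F 2 (fun _ _ => (0:ℝ)) = 0 := by
      rw [vec_eq]
      have hz : p2 (fun _ : ℝ => (0:ℝ)) = 0 := by
        unfold p2; rw [eLpNorm_zero']; simp
      simp [hz]
    rw [h0]
    simp
  | cons m hs ih =>
    intro X hX
    simp only [List.foldl_cons, List.length_cons]
    have hm : ∀ f g k, |m f g k| ≤ c := hbd m (List.mem_cons_self)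
    have hbd' : ∀ m' ∈ hs, ∀ f g k, |m' f g k| ≤ c :=
      fun m' hm' => hbd m' (List.mem_cons_of_mem _ hm')
    set Ya := gnnLayer F K Wa ρ m X with hYa
    set Yb := gnnLayer F K Wb ρ m X with hYb
    have hYam : ∀ g, MemLp (Ya g) 2 μI := fun g => layer_mem2 hWam hWab hρ hX g
    have hYbm : ∀ g, MemLp (Yb g) 2 μI := fun g => layer_mem2 hWbm hWbb hρ hX g
    have htri := vec_triangle (A := hs.foldl (fun Y hl => gnnLayer F K Wa ρ hl Y) Ya)
      (B := hs.foldl (fun Y hl => gnnLayer F K Wa ρ hl Y) Yb)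
      (C := hs.foldl (fun Y hl => gnnLayer F K Wb ρ hl Y) Yb)
      (foldl_mem2 hWam hWab hρ hs Ya hYam)
      (foldl_mem2 hWam hWab hρ hs Yb hYbm)
      (foldl_mem2 hWbm hWbb hρ hs Yb hYbm)
    refine htri.trans ?_
    have h1 := foldl_lip hWam hWab hρ hc hs hbd' Ya Yb hYam hYbm
    have h2 := ih hbd' Yb hYbm
    have h3 := vl_pert hWam hWab hWbm hWbb hρ hm hX hc
    have h4 := vl_growth hWbm hWbb hρ hm hX hc
    have hA : ((F:ℝ) * K * c) ^ hs.length
        * vecLpNorm F 2 (fun f u => Ya f u - Yb f u)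
        ≤ ((F:ℝ) * K * c) ^ hs.length
          * (((F:ℝ) * K * c) * K * graphonOpNormSub Wa Wb * vecLpNorm F 2 X) := by
      apply mul_le_mul_of_nonneg_left h3
      positivity
    have hB : (hs.length : ℝ) * K * ((F:ℝ) * K * c) ^ hs.length * graphonOpNormSub Wa Wb
        * vecLpNorm F 2 Yb
        ≤ (hs.length : ℝ) * K * ((F:ℝ) * K * c) ^ hs.length * graphonOpNormSub Wa Wb
          * (((F:ℝ) * K * c) * vecLpNorm F 2 X) := by
      apply mul_le_mul_of_nonneg_left h4
      positivity
    calc vecLpNorm F 2 (fun f u => (hs.foldl (fun Y hl => gnnLayer F K Wa ρ hl Y) Ya) f u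
          - (hs.foldl (fun Y hl => gnnLayer F K Wa ρ hl Y) Yb) f u)
        + vecLpNorm F 2 (fun f u => (hs.foldl (fun Y hl => gnnLayer F K Wa ρ hl Y) Yb) f u
          - (hs.foldl (fun Y hl => gnnLayer F K Wb ρ hl Y) Yb) f u)
        ≤ ((F:ℝ) * K * c) ^ hs.length * vecLpNorm F 2 (fun f u => Ya f u - Yb f u)
          + (hs.length : ℝ) * K * ((F:ℝ) * K * c) ^ hs.length * graphonOpNormSub Wa Wb
            * vecLpNorm F 2 Yb := add_le_add h1 h2
    _ ≤ ((F:ℝ) * K * c) ^ hs.length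
          * (((F:ℝ) * K * c) * K * graphonOpNormSub Wa Wb * vecLpNorm F 2 X)
        + (hs.length : ℝ) * K * ((F:ℝ) * K * c) ^ hs.length * graphonOpNormSub Wa Wb
          * (((F:ℝ) * K * c) * vecLpNorm F 2 X) := add_le_add hA hB
    _ = ((hs.length : ℝ) + 1) * K * ((F:ℝ) * K * c) ^ (hs.length + 1) * graphonOpNormSub Wa Wb
          * vecLpNorm F 2 X := by ring
    _ = ((hs.length + 1 : ℕ) : ℝ) * K * ((F:ℝ) * K * c) ^ (hs.length + 1)
          * graphonOpNormSub Wa Wb * vecLpNorm F 2 X := by push_cast; ring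

end foldl

section Espace
variable {F : ℕ}

def pE (F : ℕ) (v : Fin F → Lp ℝ ⊤ μI) : ℝ := vecLpNorm F 2 (fun f => (v f : ℝ → ℝ))

lemma pE_mem2 (v : Fin F → Lp ℝ ⊤ μI) (f : Fin F) : MemLp (v f : ℝ → ℝ) 2 μI :=
  mem2_of_top (Lp.memLp (v f))

lemma pE_sub_eq (v w : Fin F → Lp ℝ ⊤ μI) :
    pE F (v - w) = vecLpNorm F 2 (fun f u => (v f : ℝ → ℝ) u - (w f : ℝ → ℝ) u) := by
  apply vec_congr
  intro f
  have : ((v - w) f : ℝ → ℝ) =ᵐ[μI] fun u => (v f : ℝ → ℝ) u - (w f : ℝ → ℝ) u := by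
    have h1 : (v - w) f = v f - w f := rfl
    rw [h1]
    exact Lp.coeFn_sub (v f) (w f)
  exact this

lemma vec_le_add {A B : Fin F → ℝ → ℝ} (hA : ∀ f, MemLp (A f) 2 μI)
    (hB : ∀ f, MemLp (B f) 2 μI) :
    vecLpNorm F 2 A ≤ vecLpNorm F 2 (fun f u => A f u - B f u) + vecLpNorm F 2 B := by
  rw [vec_eq, vec_eq, vec_eq]
  refine le_trans ?_ (sqrt_sum_sq_add (fun f => p2 (fun u => A f u - B f u))
    (fun f => p2 (B f)))
  apply Real.sqrt_le_sqrt
  apply Finset.sum_le_sum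
  intro f _
  have htri : p2 (A f) ≤ p2 (fun u => A f u - B f u) + p2 (B f) := by
    have heq : A f = fun u => (A f u - B f u) + B f u := by funext u; ring
    calc p2 (A f) = p2 (fun u => (A f u - B f u) + B f u) := by rw [← heq]
    _ ≤ _ := p2_add_le ((hA f).sub (hB f)) (hB f)
  nlinarith [p2_nonneg (A f), p2_nonneg (fun u => A f u - B f u), p2_nonneg (B f)]

lemma pE_sub_pE_le (a b : Fin F → Lp ℝ ⊤ μI) : pE F a - pE F b ≤ pE F (a - b) := by
  have h := vec_le_add (A := fun f => (a f : ℝ → ℝ)) (B := fun f => (b f : ℝ → ℝ))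
    (pE_mem2 a) (pE_mem2 b)
  have h2 : vecLpNorm F 2 (fun f u => (a f : ℝ → ℝ) u - (b f : ℝ → ℝ) u) = pE F (a - b) :=
    (pE_sub_eq a b).symm
  beta_reduce at h
  rw [h2] at h
  have h' : pE F a ≤ pE F (a - b) + pE F b := h
  linarith

lemma pE_smul (c : ℝ) (v : Fin F → Lp ℝ ⊤ μI) : pE F (c • v) = |c| * pE F v := by
  unfold pE
  rw [vec_eq, vec_eq]
  have hcomp : ∀ f, p2 ((c • v) f : ℝ → ℝ) = |c| * p2 (v f : ℝ → ℝ) := by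
    intro f
    have h1 : ((c • v) f : ℝ → ℝ) =ᵐ[μI] fun u => c * (v f : ℝ → ℝ) u := by
      have h2 : (c • v) f = c • (v f) := rfl
      rw [h2]
      filter_upwards [Lp.coeFn_smul c (v f)] with u hu
      simpa using hu
    rw [p2_congr h1, p2_const_mul]
  calc Real.sqrt (∑ f, p2 ((c • v) f : ℝ → ℝ) ^ 2)
      = Real.sqrt (∑ f, c ^ 2 * p2 (v f : ℝ → ℝ) ^ 2) := by
        congr 1
        refine Finset.sum_congr rfl fun f _ => ?_
        rw [hcomp f]
        rw [mul_pow, sq_abs]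
  _ = Real.sqrt (c ^ 2 * ∑ f, p2 (v f : ℝ → ℝ) ^ 2) := by rw [Finset.mul_sum]
  _ = |c| * Real.sqrt (∑ f, p2 (v f : ℝ → ℝ) ^ 2) := by
        rw [Real.sqrt_mul (sq_nonneg c), Real.sqrt_sq_eq_abs]

lemma pE_le_norm (v : Fin F → Lp ℝ ⊤ μI) : pE F v ≤ Real.sqrt F * ‖v‖ := by
  unfold pE
  apply vec_le_of_comp_le
  intro f
  have h1 : p2 (v f : ℝ → ℝ) ≤ (eLpNorm (v f : ℝ → ℝ) ⊤ μI).toReal := by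
    apply ENNReal.toReal_mono (Lp.memLp (v f)).2.ne
    exact eLpNorm_le_eLpNorm_of_exponent_le le_top (Lp.aestronglyMeasurable (v f))
  have h2 : (eLpNorm (v f : ℝ → ℝ) ⊤ μI).toReal = ‖v f‖ := (Lp.norm_def (v f)).symm
  refine h1.trans ?_
  rw [h2]
  exact norm_le_pi_norm v f

lemma pE_lipschitz :
    LipschitzWith (Real.toNNReal (Real.sqrt F)) (pE F) := by
  apply LipschitzWith.of_dist_le_mul
  intro a b
  rw [Real.dist_eq, dist_eq_norm]
  have h1 : pE F a - pE F b ≤ Real.sqrt F * ‖a - b‖ :=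
    le_trans (pE_sub_pE_le a b) (pE_le_norm _)
  have h2 : pE F b - pE F a ≤ Real.sqrt F * ‖a - b‖ := by
    refine le_trans (pE_sub_pE_le b a) ?_
    refine le_trans (pE_le_norm _) ?_
    rw [norm_sub_rev]
  have h3 : (Real.toNNReal (Real.sqrt F) : ℝ) = Real.sqrt F :=
    Real.coe_toNNReal _ (Real.sqrt_nonneg _)
  rw [h3, abs_le]
  constructor <;> linarith

lemma pE_continuous : Continuous (pE F) := pE_lipschitz.continuous

lemma slope_freq {T : ℝ} {D : ℝ → (Fin F → Lp ℝ ⊤ μI)} {Dd : Fin F → Lp ℝ ⊤ μI}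
    {x : ℝ} (hx : x ∈ Ico 0 T) (hD : HasDerivWithinAt D Dd (Icc 0 T) x)
    {r : ℝ} (hr : pE F Dd < r) :
    ∃ᶠ z in 𝓝[>] x, (z - x)⁻¹ * (pE F (D z) - pE F (D x)) < r := by
  have hsub : Ioc x T ⊆ Icc 0 T := fun z hz => ⟨le_of_lt (lt_of_le_of_lt hx.1 hz.1), hz.2⟩
  have h1 : HasDerivWithinAt D Dd (Ioc x T) x := hD.mono hsub
  have h2 : Tendsto (slope D x) (𝓝[Ioc x T \ {x}] x) (𝓝 Dd) :=
    hasDerivWithinAt_iff_tendsto_slope.1 h1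
  have hdiff : Ioc x T \ {x} = Ioc x T := by
    apply diff_singleton_eq_self
    simp
  rw [hdiff, nhdsWithin_Ioc_eq_nhdsGT hx.2] at h2
  have h3 : Tendsto (fun z => pE F (slope D x z)) (𝓝[>] x) (𝓝 (pE F Dd)) :=
    (pE_continuous.tendsto _).comp h2
  have h4 : ∀ᶠ z in 𝓝[>] x, pE F (slope D x z) < r := by
    have : Iio r ∈ 𝓝 (pE F Dd) := Iio_mem_nhds hr
    exact h3.eventually (eventually_mem_set.2 this)
  have h5 : ∀ᶠ z in 𝓝[>] x, (z - x)⁻¹ * (pE F (D z) - pE F (D x)) < r := by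
    filter_upwards [h4, self_mem_nhdsWithin] with z hz hzx
    have hpos : (0:ℝ) < z - x := sub_pos.2 hzx
    have hle1 : pE F (D z) - pE F (D x) ≤ pE F (D z - D x) := pE_sub_pE_le _ _
    have hsl : pE F (slope D x z) = (z - x)⁻¹ * pE F (D z - D x) := by
      have : slope D x z = (z - x)⁻¹ • (D z - D x) := by
        rw [slope_def_module]
      rw [this, pE_smul, abs_of_pos (inv_pos.2 hpos)]
    have : (z - x)⁻¹ * (pE F (D z) - pE F (D x)) ≤ pE F (slope D x z) := by
      rw [hsl]
      apply mul_le_mul_of_nonneg_left hle1 (le_of_lt (inv_pos.2 hpos))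
    exact lt_of_le_of_lt this hz
  exact h5.frequently

end Espace

end

/-- **Stability of Graphon-NDEs.**
With filter bound `hTbd` on `[0,T]`, the solutions of two Graphon-NDEs with data `(W,Z)` and
`(Wₙ,Zₙ)` satisfy
`sup_{t∈[0,T]} ‖Xₙ(t) − X(t)‖_{L²} ≤ P ‖Zₙ − Z‖_{L²} + Q ‖T_{Wₙ} − T_W‖_{L²→L²}`, where
`P = exp(T (F K h_T)^L)` and `Q = (P − 1) L K sup_{t∈[0,T]} ‖X(t)‖_{L²}`. -/
theorem graphonNDE_stability
    (F K L : ℕ) (hF : 1 ≤ F) (hK : 1 ≤ K) (hL : 1 ≤ L)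
    (ρ : ℝ → ℝ) (hρ : NormalizedLipschitz ρ)
    (T : ℝ) (hT : 0 < T)
    (H : ℝ → Fin L → Fin F → Fin F → Fin K → ℝ)
    (hH : ∀ ℓ f g k, ContinuousOn (fun t => H t ℓ f g k) (Set.Icc 0 T))
    (hTbd : ℝ) (hhT : ∀ t ∈ Set.Icc (0:ℝ) T, ∀ ℓ f g k, |H t ℓ f g k| ≤ hTbd)
    (W : ℝ → ℝ → ℝ) (hWm : Measurable (Function.uncurry W))
    (hWb : ∀ u v, |W u v| ≤ 1)
    (Wn : ℝ → ℝ → ℝ) (hWnm : Measurable (Function.uncurry Wn))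
    (hWnb : ∀ u v, |Wn u v| ≤ 1)
    (Z : Fin F → ℝ → ℝ) (hZ : ∀ f, MemLp (Z f) ⊤ μI)
    (Zn : Fin F → ℝ → ℝ) (hZn : ∀ f, MemLp (Zn f) ⊤ μI)
    (X : ℝ → Fin F → Lp ℝ ⊤ μI) (hX : IsGNDESolution F K L T W ρ H Z X)
    (Xn : ℝ → Fin F → Lp ℝ ⊤ μI) (hXn : IsGNDESolution F K L T Wn ρ H Zn Xn) :
    (⨆ t : Set.Icc (0:ℝ) T,
        vecLpNorm F 2 (fun f u => (Xn (t : ℝ) f : ℝ → ℝ) u - (X (t : ℝ) f : ℝ → ℝ) u))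
      ≤ Real.exp (T * ((F : ℝ) * K * hTbd) ^ L)
          * vecLpNorm F 2 (fun f u => Zn f u - Z f u)
        + (Real.exp (T * ((F : ℝ) * K * hTbd) ^ L) - 1) * L * K
          * (⨆ t : Set.Icc (0:ℝ) T, vecLpNorm F 2 (fun f => (X (t : ℝ) f : ℝ → ℝ)))
          * graphonOpNormSub Wn W := by
  classical
  obtain ⟨hX0, Xd, hXdc, hXprop⟩ := hX
  obtain ⟨hXn0, Xnd, hXndc, hXnprop⟩ := hXn
  have h0T : (0:ℝ) ∈ Icc (0:ℝ) T := ⟨le_rfl, hT.le⟩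
  haveI : Nonempty (Icc (0:ℝ) T) := ⟨⟨0, h0T⟩⟩
  have hTbd0 : (0:ℝ) ≤ hTbd :=
    le_trans (abs_nonneg _) (hhT 0 h0T ⟨0, hL⟩ ⟨0, hF⟩ ⟨0, hF⟩ ⟨0, hK⟩)
  set A1 : ℝ := (F:ℝ) * K * hTbd with hA1def
  have hA1 : 0 ≤ A1 := by positivity
  set A : ℝ := A1 ^ L with hAdef
  have hA : 0 ≤ A := pow_nonneg hA1 L
  set oS : ℝ := graphonOpNormSub Wn W with hoSdef
  have hoS : 0 ≤ oS := opNormSub_nonneg _ _ hWnm hWnb hWm hWb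
  set S : ℝ := ⨆ t : Icc (0:ℝ) T, vecLpNorm F 2 (fun f => (X (t:ℝ) f : ℝ → ℝ)) with hSdef
  -- continuity and boundedness of X, Xn
  have hXcont : ContinuousOn X (Icc 0 T) := fun t ht => ((hXprop t ht).1).continuousWithinAt
  have hXncont : ContinuousOn Xn (Icc 0 T) := fun t ht => ((hXnprop t ht).1).continuousWithinAt
  obtain ⟨C, hC⟩ := isCompact_Icc.exists_bound_of_continuousOn hXcont
  have hSbdd : BddAbove (Set.range fun t : Icc (0:ℝ) T =>
      vecLpNorm F 2 (fun f => (X (t:ℝ) f : ℝ → ℝ))) := by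
    refine ⟨Real.sqrt F * C, ?_⟩
    rintro y ⟨t, rfl⟩
    exact (pE_le_norm (X (t:ℝ))).trans
      (mul_le_mul_of_nonneg_left (hC t t.2) (Real.sqrt_nonneg _))
  have hXtS : ∀ t : Icc (0:ℝ) T, vecLpNorm F 2 (fun f => (X (t:ℝ) f : ℝ → ℝ)) ≤ S :=
    fun t => le_ciSup hSbdd t
  have hS0 : 0 ≤ S := le_trans (vec_nonneg _) (hXtS ⟨0, h0T⟩)
  -- the difference trajectory
  set D : ℝ → (Fin F → Lp ℝ ⊤ μI) := fun t => Xn t - X t with hDdef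
  set Dd : ℝ → (Fin F → Lp ℝ ⊤ μI) := fun t => Xnd t - Xd t with hDddef
  have hDderiv : ∀ t ∈ Icc (0:ℝ) T, HasDerivWithinAt D (Dd t) (Icc 0 T) t :=
    fun t ht => ((hXnprop t ht).1).sub ((hXprop t ht).1)
  set φ : ℝ → ℝ := fun t => pE F (D t) with hφdef
  have hφcont : ContinuousOn φ (Icc 0 T) :=
    pE_continuous.comp_continuousOn (hXncont.sub hXcont)
  have hφeq : ∀ t : ℝ, φ t
      = vecLpNorm F 2 (fun f u => (Xn t f : ℝ → ℝ) u - (X t f : ℝ → ℝ) u) :=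
    fun t => pE_sub_eq (Xn t) (X t)
  -- initial value
  set δ : ℝ := vecLpNorm F 2 (fun f u => Zn f u - Z f u) with hδdef
  have hδ0 : 0 ≤ δ := vec_nonneg _
  have hφ0 : φ 0 ≤ δ := by
    rw [hφeq 0]
    apply le_of_eq
    apply vec_congr
    intro f
    filter_upwards [hXn0 f, hX0 f] with u h1 h2
    rw [h1, h2]
  set ε : ℝ := (L:ℝ) * K * A * oS * S with hεdef
  have hε0 : 0 ≤ ε := by positivity
  -- the derivative bound
  have hbound : ∀ t ∈ Ico (0:ℝ) T, pE F (Dd t) ≤ A * φ t + ε := by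
    intro t ht
    have htIcc : t ∈ Icc (0:ℝ) T := ⟨ht.1, ht.2.le⟩
    have hHbd : ∀ m ∈ List.ofFn (H t), ∀ f g k, |m f g k| ≤ hTbd := by
      intro m hm f g k
      obtain ⟨ℓ, rfl⟩ := List.mem_ofFn.1 hm
      exact hhT t htIcc ℓ f g k
    have hXnmem : ∀ g, MemLp ((Xn t g : ℝ → ℝ)) 2 μI := fun g => pE_mem2 (Xn t) g
    have hXmem : ∀ g, MemLp ((X t g : ℝ → ℝ)) 2 μI := fun g => pE_mem2 (X t) g
    have hpE : pE F (Dd t) = vecLpNorm F 2 (fun f u =>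
        gnn F K L Wn ρ (H t) (fun g => (Xn t g : ℝ → ℝ)) f u
        - gnn F K L W ρ (H t) (fun g => (X t g : ℝ → ℝ)) f u) := by
      rw [hDddef]
      rw [pE_sub_eq]
      apply vec_congr
      intro f
      filter_upwards [(hXnprop t htIcc).2 f, (hXprop t htIcc).2 f] with u h1 h2
      rw [h1, h2]
    rw [hpE]
    have hmem1 : ∀ f, MemLp (gnn F K L Wn ρ (H t) (fun g => (Xn t g : ℝ → ℝ)) f) 2 μI :=
      foldl_mem2 hWnm hWnb hρ (List.ofFn (H t)) _ hXnmem
    have hmem2' : ∀ f, MemLp (gnn F K L Wn ρ (H t) (fun g => (X t g : ℝ → ℝ)) f) 2 μI :=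
      foldl_mem2 hWnm hWnb hρ (List.ofFn (H t)) _ hXmem
    have hmem3 : ∀ f, MemLp (gnn F K L W ρ (H t) (fun g => (X t g : ℝ → ℝ)) f) 2 μI :=
      foldl_mem2 hWm hWb hρ (List.ofFn (H t)) _ hXmem
    have htri := vec_triangle (A := gnn F K L Wn ρ (H t) (fun g => (Xn t g : ℝ → ℝ)))
      (B := gnn F K L Wn ρ (H t) (fun g => (X t g : ℝ → ℝ)))
      (C := gnn F K L W ρ (H t) (fun g => (X t g : ℝ → ℝ)))
      hmem1 hmem2' hmem3
    refine htri.trans ?_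
    have hlip := foldl_lip hWnm hWnb hρ hTbd0 (List.ofFn (H t)) hHbd
      (fun g => (Xn t g : ℝ → ℝ)) (fun g => (X t g : ℝ → ℝ)) hXnmem hXmem
    have hpert := foldl_pert hWnm hWnb hWm hWb hρ hTbd0 (List.ofFn (H t)) hHbd
      (fun g => (X t g : ℝ → ℝ)) hXmem
    rw [List.length_ofFn] at hlip hpert
    have hterm1 : vecLpNorm F 2 (fun f u =>
        gnn F K L Wn ρ (H t) (fun g => (Xn t g : ℝ → ℝ)) f u
        - gnn F K L Wn ρ (H t) (fun g => (X t g : ℝ → ℝ)) f u) ≤ A * φ t := by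
      refine le_trans hlip (le_of_eq ?_)
      simp only [hφeq t, hAdef, hA1def]
    have hterm2 : vecLpNorm F 2 (fun f u =>
        gnn F K L Wn ρ (H t) (fun g => (X t g : ℝ → ℝ)) f u
        - gnn F K L W ρ (H t) (fun g => (X t g : ℝ → ℝ)) f u) ≤ ε := by
      refine le_trans hpert ?_
      rw [hεdef, hAdef, hA1def, hoSdef]
      have hXle : vecLpNorm F 2 (fun f => (X t f : ℝ → ℝ)) ≤ S := hXtS ⟨t, htIcc⟩
      calc (L:ℝ) * K * ((F:ℝ) * K * hTbd) ^ L * graphonOpNormSub Wn W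
            * vecLpNorm F 2 (fun f => (X t f : ℝ → ℝ))
          ≤ (L:ℝ) * K * ((F:ℝ) * K * hTbd) ^ L * graphonOpNormSub Wn W * S := by
            apply mul_le_mul_of_nonneg_left hXle
            have : (0:ℝ) ≤ ((F:ℝ) * K * hTbd) ^ L := by positivity
            have := hoS
            rw [hoSdef] at this
            positivity
      _ = (L:ℝ) * K * ((F:ℝ) * K * hTbd) ^ L * graphonOpNormSub Wn W * S := rfl
    linarith [add_le_add hterm1 hterm2]
  -- Grönwall
  have hgron := le_gronwallBound_of_liminf_deriv_right_le (f := φ)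
    (f' := fun t => pE F (Dd t)) (δ := δ) (K := A) (ε := ε) (a := 0) (b := T)
    hφcont
    (fun x hx r hr => slope_freq hx (hDderiv x ⟨hx.1, hx.2.le⟩) hr)
    hφ0 hbound
  -- final bound on the gronwall bound
  have hfinal : ∀ t ∈ Icc (0:ℝ) T, gronwallBound δ A ε (t - 0)
      ≤ Real.exp (T * A) * δ + (Real.exp (T * A) - 1) * L * K * S * oS := by
    intro t ht
    by_cases hA0 : A = 0
    · have hε' : ε = 0 := by rw [hεdef, hA0]; ring
      rw [hA0, hε', gronwallBound]
      simp [hA0]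
    · have hApos : 0 < A := lt_of_le_of_ne hA (Ne.symm hA0)
      rw [gronwallBound_of_K_ne_0 hA0]
      have hexp : Real.exp (A * (t - 0)) ≤ Real.exp (A * T) := by
        apply Real.exp_le_exp.2
        have := ht.2
        nlinarith
      have hεA : ε / A = (L:ℝ) * K * oS * S := by
        rw [hεdef]
        field_simp
      have h1 : δ * Real.exp (A * (t - 0)) ≤ δ * Real.exp (A * T) :=
        mul_le_mul_of_nonneg_left hexp hδ0
      have h2 : ε / A * (Real.exp (A * (t - 0)) - 1) ≤ ε / A * (Real.exp (A * T) - 1) := by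
        apply mul_le_mul_of_nonneg_left _ (div_nonneg hε0 hA)
        linarith
      have h3 : δ * Real.exp (A * (t - 0)) + ε / A * (Real.exp (A * (t - 0)) - 1)
          ≤ δ * Real.exp (A * T) + ε / A * (Real.exp (A * T) - 1) := add_le_add h1 h2
      refine h3.trans ?_
      rw [hεA]
      rw [show A * T = T * A by ring]
      apply le_of_eq
      ring
  -- conclude
  apply ciSup_le
  intro t
  have h1 : vecLpNorm F 2 (fun f u => (Xn (t:ℝ) f : ℝ → ℝ) u - (X (t:ℝ) f : ℝ → ℝ) u)
      = φ (t:ℝ) := (hφeq (t:ℝ)).symm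
  rw [h1]
  refine (hgron (t:ℝ) t.2).trans ?_
  exact hfinal (t:ℝ) t.2
end

section
/- Suppose ρ is normalized Lipschitz, W, W̃ : I² → ℝ are measurable with |W| ≤ 1 and |W̃| ≤ 1 a.e., and the filter coefficients (h_{fgk}^{(ℓ)}) satisfy |h_{fgk}^{(ℓ)}| ≤ h̄ for all f,g ∈ {1,…,F}, k ∈ {0,…,K−1}, ℓ ∈ {1,…,L}. Then for any X, X̃ ∈ L^∞(I; ℝ^F), ‖Φ(W̃; X̃; h) − Φ(W; X; h)‖_{L²(I;ℝ^F)} ≤ (F K h̄)^L ( ‖X̃ − X‖_{L²(I;ℝ^F)} + L K ‖T_{W̃} − T_W‖_{L²(I)→L²(I)} ‖X‖_{L²(I;ℝ^F)} ). -/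
open MeasureTheory Filter Set
open scoped ENNReal NNReal

/-! ### Auxiliary material for the stability theorem -/

noncomputable section GnnAux

open MeasureTheory Filter Set
open scoped ENNReal NNReal

namespace GnnAux

instance : IsProbabilityMeasure μI :=
  ⟨by rw [μI, Measure.restrict_apply_univ, Real.volume_Icc]; norm_num⟩

/-- `L²(I)`-norm as a real number. -/
def n2 (x : ℝ → ℝ) : ℝ := (eLpNorm x 2 μI).toReal

lemma n2_nonneg (x : ℝ → ℝ) : 0 ≤ n2 x := ENNReal.toReal_nonneg

lemma n2_congr {x y : ℝ → ℝ} (h : x =ᵐ[μI] y) : n2 x = n2 y := by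
  rw [n2, n2, eLpNorm_congr_ae h]

lemma graphonOp_apply (W : ℝ → ℝ → ℝ) (x : ℝ → ℝ) (v : ℝ) :
    graphonOp W x v = ∫ u, W u v * x u ∂μI := rfl

lemma graphonOp_congr {W : ℝ → ℝ → ℝ} {x y : ℝ → ℝ} (hxy : x =ᵐ[μI] y) :
    graphonOp W x = graphonOp W y := by
  funext v
  exact integral_congr_ae (hxy.mono fun u hu => by
    show W u v * x u = W u v * y u; rw [hu])

lemma measurable_graphonOp {W : ℝ → ℝ → ℝ} (hWm : Measurable (Function.uncurry W))
    {x : ℝ → ℝ} (hx : Measurable x) : Measurable (graphonOp W x) := by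
  have hm : StronglyMeasurable (Function.uncurry fun v u => W u v * x u) :=
    ((hWm.comp measurable_swap).mul (hx.comp measurable_snd)).stronglyMeasurable
  have := hm.integral_prod_right (ν := volume.restrict (Set.Icc (0:ℝ) 1))
  exact this.measurable

lemma ae_ae_of_kernel_bound {W : ℝ → ℝ → ℝ} (hWm : Measurable (Function.uncurry W))
    (hWb : ∀ᵐ q ∂μI2, |Function.uncurry W q| ≤ 1) :
    ∀ᵐ v ∂μI, ∀ᵐ u ∂μI, |W u v| ≤ 1 := by
  have hprod : μI2 = μI.prod μI := by
    rw [μI2, μI, Measure.volume_eq_prod, Measure.prod_restrict]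
  rw [hprod] at hWb
  have hmeas : MeasurableSet {q : ℝ × ℝ | |Function.uncurry W q| ≤ 1} :=
    measurableSet_le hWm.abs measurable_const
  have hswap : ∀ᵐ p ∂(μI.prod μI), |W p.2 p.1| ≤ 1 := by
    have h1 : ∀ᵐ q ∂(Measure.map Prod.swap (μI.prod μI)), |Function.uncurry W q| ≤ 1 := by
      rwa [Measure.prod_swap]
    exact (ae_map_iff measurable_swap.aemeasurable hmeas).mp h1
  exact Measure.ae_ae_of_ae_prod hswap

lemma measurable_section {W : ℝ → ℝ → ℝ} (hWm : Measurable (Function.uncurry W)) (v : ℝ) :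
    Measurable fun u => W u v :=
  hWm.comp (measurable_id.prodMk measurable_const)

lemma section_integrable {W : ℝ → ℝ → ℝ} {x : ℝ → ℝ} (hxi : Integrable x μI)
    {v : ℝ} (hv : ∀ᵐ u ∂μI, |W u v| ≤ 1)
    (hsec : Measurable fun u => W u v) :
    Integrable (fun u => W u v * x u) μI := by
  refine Integrable.mono' hxi.abs
    ((hsec.aestronglyMeasurable).mul hxi.aestronglyMeasurable) ?_
  filter_upwards [hv] with u hu
  rw [Real.norm_eq_abs, abs_mul]
  calc |W u v| * |x u| ≤ 1 * |x u| :=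
        mul_le_mul_of_nonneg_right hu (abs_nonneg _)
    _ = |x u| := one_mul _

lemma graphonOp_ae_bound {W : ℝ → ℝ → ℝ} (hWm : Measurable (Function.uncurry W))
    (hWb : ∀ᵐ q ∂μI2, |Function.uncurry W q| ≤ 1) {x : ℝ → ℝ}
    (hxi : Integrable x μI) :
    ∀ᵐ v ∂μI, |graphonOp W x v| ≤ ∫ u, |x u| ∂μI := by
  filter_upwards [ae_ae_of_kernel_bound hWm hWb] with v hv
  have hint : Integrable (fun u => W u v * x u) μI :=
    section_integrable hxi hv (measurable_section hWm v)
  calc |graphonOp W x v| = ‖∫ u, W u v * x u ∂μI‖ := by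
        rw [graphonOp_apply, Real.norm_eq_abs]
    _ ≤ ∫ u, ‖W u v * x u‖ ∂μI := norm_integral_le_integral_norm _
    _ ≤ ∫ u, |x u| ∂μI := by
        refine integral_mono_ae hint.norm hxi.abs ?_
        filter_upwards [hv] with u hu
        rw [Real.norm_eq_abs, abs_mul]
        calc |W u v| * |x u| ≤ 1 * |x u| :=
              mul_le_mul_of_nonneg_right hu (abs_nonneg _)
          _ = |x u| := one_mul _

lemma graphonOp_eLpNorm_le {W : ℝ → ℝ → ℝ} (hWm : Measurable (Function.uncurry W))
    (hWb : ∀ᵐ q ∂μI2, |Function.uncurry W q| ≤ 1) {x : ℝ → ℝ}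
    (hxi : Integrable x μI) :
    eLpNorm (graphonOp W x) 2 μI ≤ eLpNorm x 2 μI := by
  have hb := graphonOp_ae_bound hWm hWb hxi
  have h1 : eLpNorm (graphonOp W x) 2 μI ≤ ENNReal.ofReal (∫ u, |x u| ∂μI) := by
    have := eLpNorm_le_of_ae_bound (p := 2) (μ := μI) (f := graphonOp W x)
      (C := ∫ u, |x u| ∂μI) (by filter_upwards [hb] with v hv; rwa [Real.norm_eq_abs])
    simpa [measure_univ] using this
  have h2 : ENNReal.ofReal (∫ u, |x u| ∂μI) = eLpNorm x 1 μI := by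
    rw [eLpNorm_one_eq_lintegral_enorm, ← ofReal_integral_norm_eq_lintegral_enorm hxi]
    simp [Real.norm_eq_abs]
  have h3 : eLpNorm x 1 μI ≤ eLpNorm x 2 μI :=
    eLpNorm_le_eLpNorm_of_exponent_le one_le_two hxi.aestronglyMeasurable
  exact h1.trans (h2 ▸ h3)

/-- Good functions: measurable and essentially bounded on `I`. -/
structure Nice (x : ℝ → ℝ) : Prop where
  meas : Measurable x
  mem : MemLp x ⊤ μI

lemma Nice.mem2 {x : ℝ → ℝ} (hx : Nice x) : MemLp x 2 μI :=
  hx.mem.mono_exponent le_top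

lemma Nice.integrable {x : ℝ → ℝ} (hx : Nice x) : Integrable x μI :=
  hx.mem.integrable le_top

lemma Nice.sub {x y : ℝ → ℝ} (hx : Nice x) (hy : Nice y) :
    Nice (fun u => x u - y u) :=
  ⟨hx.meas.sub hy.meas, hx.mem.sub hy.mem⟩

lemma Nice.op {W : ℝ → ℝ → ℝ} (hWm : Measurable (Function.uncurry W))
    (hWb : ∀ᵐ q ∂μI2, |Function.uncurry W q| ≤ 1) {x : ℝ → ℝ} (hx : Nice x) :
    Nice (graphonOp W x) := by
  refine ⟨measurable_graphonOp hWm hx.meas, ?_⟩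
  refine memLp_top_of_bound (measurable_graphonOp hWm hx.meas).aestronglyMeasurable
    (∫ u, |x u| ∂μI) ?_
  filter_upwards [graphonOp_ae_bound hWm hWb hx.integrable] with v hv
  rwa [Real.norm_eq_abs]

lemma Nice.iter {W : ℝ → ℝ → ℝ} (hWm : Measurable (Function.uncurry W))
    (hWb : ∀ᵐ q ∂μI2, |Function.uncurry W q| ≤ 1) {x : ℝ → ℝ} (hx : Nice x) (k : ℕ) :
    Nice (graphonIter W k x) := by
  induction k with
  | zero => simpa [graphonIter] using hx
  | succ k ih =>
      rw [graphonIter, Function.iterate_succ_apply']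
      exact Nice.op hWm hWb ih

lemma n2_op_le {W : ℝ → ℝ → ℝ} (hWm : Measurable (Function.uncurry W))
    (hWb : ∀ᵐ q ∂μI2, |Function.uncurry W q| ≤ 1) {x : ℝ → ℝ} (hx : Nice x) :
    n2 (graphonOp W x) ≤ n2 x :=
  ENNReal.toReal_mono hx.mem2.eLpNorm_ne_top (graphonOp_eLpNorm_le hWm hWb hx.integrable)

lemma n2_iter_le {W : ℝ → ℝ → ℝ} (hWm : Measurable (Function.uncurry W))
    (hWb : ∀ᵐ q ∂μI2, |Function.uncurry W q| ≤ 1) {x : ℝ → ℝ} (hx : Nice x) (k : ℕ) :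
    n2 (graphonIter W k x) ≤ n2 x := by
  induction k with
  | zero => simp [graphonIter]
  | succ k ih =>
      rw [graphonIter, Function.iterate_succ_apply']
      exact (n2_op_le hWm hWb (hx.iter hWm hWb k)).trans ih

lemma n2_add_le {x y : ℝ → ℝ} (hx : MemLp x 2 μI) (hy : MemLp y 2 μI) :
    n2 (fun u => x u + y u) ≤ n2 x + n2 y := by
  have h := eLpNorm_add_le hx.aestronglyMeasurable hy.aestronglyMeasurable one_le_two
  have hxt := hx.eLpNorm_ne_top
  have hyt := hy.eLpNorm_ne_top
  calc n2 (fun u => x u + y u) = (eLpNorm (x + y) 2 μI).toReal := rfl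
    _ ≤ (eLpNorm x 2 μI + eLpNorm y 2 μI).toReal :=
        ENNReal.toReal_mono (by simp [ENNReal.add_ne_top, hxt, hyt]) h
    _ = n2 x + n2 y := ENNReal.toReal_add hxt hyt

lemma n2_mono {x y : ℝ → ℝ} (h : ∀ᵐ u ∂μI, |x u| ≤ |y u|) (hy : MemLp y 2 μI) :
    n2 x ≤ n2 y :=
  ENNReal.toReal_mono hy.eLpNorm_ne_top
    (eLpNorm_mono_ae (by filter_upwards [h] with u hu; simpa [Real.norm_eq_abs] using hu))

lemma n2_sum_le {ι : Type*} (s : Finset ι) (f : ι → ℝ → ℝ)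
    (hf : ∀ i ∈ s, MemLp (f i) 2 μI) :
    n2 (fun u => ∑ i ∈ s, f i u) ≤ ∑ i ∈ s, n2 (f i) := by
  classical
  induction s using Finset.induction_on with
  | empty => simp [n2]
  | insert _ _ hni ih =>
      rename_i a s
      simp only [Finset.sum_insert hni]
      calc n2 (fun u => f a u + ∑ i ∈ s, f i u)
          ≤ n2 (f a) + n2 (fun u => ∑ i ∈ s, f i u) :=
            n2_add_le (hf a (Finset.mem_insert_self a s))
              (memLp_finset_sum s fun i hi => hf i (Finset.mem_insert_of_mem hi))
        _ ≤ n2 (f a) + ∑ i ∈ s, n2 (f i) := by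
            have := ih fun i hi => hf i (Finset.mem_insert_of_mem hi)
            linarith

lemma n2_const_mul (c : ℝ) (x : ℝ → ℝ) : n2 (fun u => c * x u) = |c| * n2 x := by
  have h : (fun u => c * x u) = c • x := rfl
  rw [h, n2, eLpNorm_const_smul, ENNReal.toReal_mul, n2]
  simp [Real.norm_eq_abs]

lemma opNormSub_nonneg (Wt W : ℝ → ℝ → ℝ) : 0 ≤ graphonOpNormSub Wt W :=
  Real.iSup_nonneg fun _ => ENNReal.toReal_nonneg

lemma opNormSub_bdd {W Wt : ℝ → ℝ → ℝ}
    (hWm : Measurable (Function.uncurry W)) (hWtm : Measurable (Function.uncurry Wt))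
    (hWb : ∀ᵐ q ∂μI2, |Function.uncurry W q| ≤ 1)
    (hWtb : ∀ᵐ q ∂μI2, |Function.uncurry Wt q| ≤ 1) :
    BddAbove (Set.range fun x : {x : ℝ → ℝ // MemLp x 2 μI ∧ eLpNorm x 2 μI ≤ 1} =>
      (eLpNorm (fun v => graphonOp Wt x v - graphonOp W x v) 2 μI).toReal) := by
  refine ⟨2, ?_⟩
  rintro r ⟨⟨x, hx, hx1⟩, rfl⟩
  have hxx' : x =ᵐ[μI] hx.aestronglyMeasurable.mk x := hx.aestronglyMeasurable.ae_eq_mk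
  set x' : ℝ → ℝ := hx.aestronglyMeasurable.mk x with hx'def
  have hx'm : Measurable x' := hx.aestronglyMeasurable.stronglyMeasurable_mk.measurable
  have hx'2 : MemLp x' 2 μI := hx.ae_eq hxx'
  have hx'i : Integrable x' μI := hx'2.integrable one_le_two
  have e : (fun v => graphonOp Wt x v - graphonOp W x v)
      = fun v => graphonOp Wt x' v - graphonOp W x' v := by
    rw [graphonOp_congr (W := Wt) hxx', graphonOp_congr (W := W) hxx']
  show (eLpNorm (fun v => graphonOp Wt x v - graphonOp W x v) 2 μI).toReal ≤ 2
  rw [e]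
  have h1 : eLpNorm (fun v => graphonOp Wt x' v - graphonOp W x' v) 2 μI
      ≤ eLpNorm (graphonOp Wt x') 2 μI + eLpNorm (graphonOp W x') 2 μI :=
    eLpNorm_sub_le (measurable_graphonOp hWtm hx'm).aestronglyMeasurable
      (measurable_graphonOp hWm hx'm).aestronglyMeasurable one_le_two
  have hx'n : eLpNorm x' 2 μI ≤ 1 := by
    rw [← eLpNorm_congr_ae hxx']; exact hx1
  have h2 : eLpNorm (fun v => graphonOp Wt x' v - graphonOp W x' v) 2 μI ≤ 2 := by
    refine h1.trans ?_
    have ha := (graphonOp_eLpNorm_le hWtm hWtb hx'i).trans hx'n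
    have hb := (graphonOp_eLpNorm_le hWm hWb hx'i).trans hx'n
    calc eLpNorm (graphonOp Wt x') 2 μI + eLpNorm (graphonOp W x') 2 μI
        ≤ 1 + 1 := add_le_add ha hb
      _ = 2 := one_add_one_eq_two
  refine ENNReal.toReal_le_of_le_ofReal (by norm_num) ?_
  rw [show ENNReal.ofReal (2:ℝ) = 2 by norm_num]
  exact h2

lemma n2_opdiff_le {W Wt : ℝ → ℝ → ℝ}
    (hWm : Measurable (Function.uncurry W)) (hWtm : Measurable (Function.uncurry Wt))
    (hWb : ∀ᵐ q ∂μI2, |Function.uncurry W q| ≤ 1)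
    (hWtb : ∀ᵐ q ∂μI2, |Function.uncurry Wt q| ≤ 1)
    {x : ℝ → ℝ} (hx : MemLp x 2 μI) :
    n2 (fun v => graphonOp Wt x v - graphonOp W x v)
      ≤ graphonOpNormSub Wt W * n2 x := by
  rcases eq_or_ne (eLpNorm x 2 μI) 0 with h0 | h0
  · have hx0 : x =ᵐ[μI] (fun _ => (0:ℝ)) :=
      (eLpNorm_eq_zero_iff hx.aestronglyMeasurable (by norm_num)).mp h0
    have e : (fun v => graphonOp Wt x v - graphonOp W x v) = fun _ => (0:ℝ) := by
      rw [graphonOp_congr (W := Wt) hx0, graphonOp_congr (W := W) hx0]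
      funext v
      simp [graphonOp]
    rw [e]
    have h1 : n2 (fun _ : ℝ => (0:ℝ)) = 0 := by simp [n2, eLpNorm_zero']
    rw [h1]
    exact mul_nonneg (opNormSub_nonneg _ _) (n2_nonneg _)
  · set c : ℝ := n2 x with hc
    have hcpos : 0 < c := ENNReal.toReal_pos h0 hx.eLpNorm_ne_top
    set y : ℝ → ℝ := fun u => c⁻¹ * x u with hy_def
    have hy : MemLp y 2 μI := hx.const_mul c⁻¹
    have hy1 : eLpNorm y 2 μI ≤ 1 := by
      have hsm : eLpNorm y 2 μI = ‖c⁻¹‖ₑ * eLpNorm x 2 μI := by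
        rw [show y = c⁻¹ • x from rfl, eLpNorm_const_smul]
      rw [hsm, Real.enorm_eq_ofReal (by positivity),
        show eLpNorm x 2 μI = ENNReal.ofReal c from (ENNReal.ofReal_toReal hx.eLpNorm_ne_top).symm,
        ← ENNReal.ofReal_mul (by positivity), inv_mul_cancel₀ hcpos.ne']
      simp
    have hle := le_ciSup (opNormSub_bdd hWm hWtm hWb hWtb)
      (⟨y, hy, hy1⟩ : {x : ℝ → ℝ // MemLp x 2 μI ∧ eLpNorm x 2 μI ≤ 1})
    have hyx : (fun v => graphonOp Wt y v - graphonOp W y v)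
        = fun v => c⁻¹ * (graphonOp Wt x v - graphonOp W x v) := by
      funext v
      have key : ∀ V : ℝ → ℝ → ℝ, graphonOp V y v = c⁻¹ * graphonOp V x v := by
        intro V
        rw [graphonOp_apply, graphonOp_apply, ← integral_const_mul]
        exact integral_congr_ae (Eventually.of_forall fun u => by
          show V u v * (c⁻¹ * x u) = c⁻¹ * (V u v * x u); ring)
      rw [key Wt, key W]
      ring
    have hval : (eLpNorm (fun v => graphonOp Wt y v - graphonOp W y v) 2 μI).toReal
        = c⁻¹ * n2 (fun v => graphonOp Wt x v - graphonOp W x v) := by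
      rw [hyx]
      rw [show ((eLpNorm (fun v => c⁻¹ * (graphonOp Wt x v - graphonOp W x v)) 2 μI).toReal)
        = n2 (fun v => c⁻¹ * (graphonOp Wt x v - graphonOp W x v)) from rfl,
        n2_const_mul, abs_of_pos (by positivity)]
    rw [hval] at hle
    have := mul_le_mul_of_nonneg_left hle hcpos.le
    rw [← mul_assoc, mul_inv_cancel₀ hcpos.ne', one_mul] at this
    calc n2 (fun v => graphonOp Wt x v - graphonOp W x v)
        ≤ c * graphonOpNormSub Wt W := by
          exact this.trans_eq rfl
      _ = graphonOpNormSub Wt W * n2 x := by rw [mul_comm, hc]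

lemma iter_diff_le {W Wt : ℝ → ℝ → ℝ}
    (hWm : Measurable (Function.uncurry W)) (hWtm : Measurable (Function.uncurry Wt))
    (hWb : ∀ᵐ q ∂μI2, |Function.uncurry W q| ≤ 1)
    (hWtb : ∀ᵐ q ∂μI2, |Function.uncurry Wt q| ≤ 1)
    {x xt : ℝ → ℝ} (hx : Nice x) (hxt : Nice xt) (k : ℕ) :
    n2 (fun u => graphonIter Wt k xt u - graphonIter W k x u)
      ≤ n2 (fun u => xt u - x u) + k * graphonOpNormSub Wt W * n2 x := by
  induction k with
  | zero => simp [graphonIter]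
  | succ k ih =>
      have ha : Nice (graphonIter Wt k xt) := hxt.iter hWtm hWtb k
      have hb : Nice (graphonIter W k x) := hx.iter hWm hWb k
      set a := graphonIter Wt k xt with hadef
      set b := graphonIter W k x with hbdef
      have hab : Nice (fun u => a u - b u) := ha.sub hb
      have hstep : (fun u => graphonIter Wt (k+1) xt u - graphonIter W (k+1) x u)
          =ᵐ[μI] fun v => graphonOp Wt (fun u => a u - b u) v
            + (graphonOp Wt b v - graphonOp W b v) := by
        filter_upwards [ae_ae_of_kernel_bound hWtm hWtb] with v hv
        have e1 : graphonIter Wt (k+1) xt = graphonOp Wt a := by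
          rw [graphonIter, Function.iterate_succ_apply']; rfl
        have e2 : graphonIter W (k+1) x = graphonOp W b := by
          rw [graphonIter, Function.iterate_succ_apply']; rfl
        rw [e1, e2]
        have hia : Integrable (fun u => Wt u v * a u) μI :=
          section_integrable ha.integrable hv (measurable_section hWtm v)
        have hib : Integrable (fun u => Wt u v * b u) μI :=
          section_integrable hb.integrable hv (measurable_section hWtm v)
        have hsplit : graphonOp Wt (fun u => a u - b u) v
            = graphonOp Wt a v - graphonOp Wt b v := by
          rw [graphonOp_apply, graphonOp_apply, graphonOp_apply, ← integral_sub hia hib]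
          exact integral_congr_ae (Eventually.of_forall fun u => by
            show Wt u v * (a u - b u) = Wt u v * a u - Wt u v * b u; ring)
        rw [hsplit]
        ring
      rw [n2_congr hstep]
      have hopab : Nice (graphonOp Wt (fun u => a u - b u)) := hab.op hWtm hWtb
      have hdiffmem : MemLp (fun v => graphonOp Wt b v - graphonOp W b v) 2 μI :=
        ((hb.op hWtm hWtb).mem2).sub ((hb.op hWm hWb).mem2)
      have h1 := n2_add_le hopab.mem2 hdiffmem
      have h2 : n2 (graphonOp Wt (fun u => a u - b u)) ≤ n2 (fun u => a u - b u) :=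
        n2_op_le hWtm hWtb hab
      have h3 : n2 (fun v => graphonOp Wt b v - graphonOp W b v)
          ≤ graphonOpNormSub Wt W * n2 b :=
        n2_opdiff_le hWm hWtm hWb hWtb hb.mem2
      have h4 : n2 b ≤ n2 x := n2_iter_le hWm hWb hx k
      have h5 : graphonOpNormSub Wt W * n2 b ≤ graphonOpNormSub Wt W * n2 x :=
        mul_le_mul_of_nonneg_left h4 (opNormSub_nonneg Wt W)
      have h6 : n2 (fun u => a u - b u)
          ≤ n2 (fun u => xt u - x u) + k * graphonOpNormSub Wt W * n2 x := ih
      push_cast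
      linarith

lemma sqrt_card_sum {F : ℕ} (a : Fin F → ℝ) (ha : ∀ g, 0 ≤ a g) :
    ∑ g, a g ≤ Real.sqrt F * Real.sqrt (∑ g, (a g) ^ 2) := by
  have h := Finset.sum_mul_sq_le_sq_mul_sq Finset.univ (fun _ : Fin F => (1:ℝ)) a
  simp only [one_pow, one_mul, Finset.sum_const, Finset.card_univ, Fintype.card_fin,
    nsmul_eq_mul] at h
  have h0 : (0:ℝ) ≤ ∑ g, a g := Finset.sum_nonneg fun g _ => ha g
  calc ∑ g, a g = Real.sqrt ((∑ g, a g) ^ 2) := (Real.sqrt_sq h0).symm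
    _ ≤ Real.sqrt ((F:ℝ) * ∑ g, (a g) ^ 2) := Real.sqrt_le_sqrt (by simpa using h)
    _ = Real.sqrt F * Real.sqrt (∑ g, (a g) ^ 2) := Real.sqrt_mul (by positivity) _

lemma vec2_eq (F : ℕ) (X : Fin F → ℝ → ℝ) :
    vecLpNorm F 2 X = Real.sqrt (∑ f, (n2 (X f)) ^ 2) := rfl

lemma vec_nonneg (F : ℕ) (p : ℝ≥0∞) (X : Fin F → ℝ → ℝ) : 0 ≤ vecLpNorm F p X :=
  Real.sqrt_nonneg _

lemma vec_le_of_forall {F : ℕ} {X : Fin F → ℝ → ℝ} {B : ℝ} (hB : 0 ≤ B)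
    (h : ∀ f, n2 (X f) ≤ B) : vecLpNorm F 2 X ≤ Real.sqrt F * B := by
  rw [vec2_eq]
  calc Real.sqrt (∑ f, (n2 (X f)) ^ 2) ≤ Real.sqrt (∑ _f : Fin F, B ^ 2) := by
        apply Real.sqrt_le_sqrt
        exact Finset.sum_le_sum fun f _ => pow_le_pow_left₀ (n2_nonneg _) (h f) 2
    _ = Real.sqrt ((F:ℝ) * B ^ 2) := by
        rw [Finset.sum_const, Finset.card_univ, Fintype.card_fin, nsmul_eq_mul]
    _ = Real.sqrt F * B := by
        rw [Real.sqrt_mul (by positivity), Real.sqrt_sq hB]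

lemma sum_n2_le {F : ℕ} (X : Fin F → ℝ → ℝ) :
    ∑ f, n2 (X f) ≤ Real.sqrt F * vecLpNorm F 2 X :=
  sqrt_card_sum _ fun f => n2_nonneg _

lemma vec_congr {F : ℕ} {Y Z : Fin F → ℝ → ℝ} (h : ∀ f, Y f =ᵐ[μI] Z f) :
    vecLpNorm F 2 Y = vecLpNorm F 2 Z := by
  unfold vecLpNorm
  congr 1
  exact Finset.sum_congr rfl fun f _ => by rw [eLpNorm_congr_ae (h f)]

lemma rho_abs_le {ρ : ℝ → ℝ} (hρ : NormalizedLipschitz ρ) (t : ℝ) : |ρ t| ≤ |t| := by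
  have := hρ.1 t 0
  simpa [hρ.2] using this

lemma rho_measurable {ρ : ℝ → ℝ} (hρ : NormalizedLipschitz ρ) : Measurable ρ := by
  have : LipschitzWith 1 ρ := LipschitzWith.of_dist_le_mul fun x y => by
    simpa [Real.dist_eq] using hρ.1 x y
  exact this.continuous.measurable

section Layer

variable {F K : ℕ} {W Wt : ℝ → ℝ → ℝ} {ρ : ℝ → ℝ} {hbar : ℝ}

lemma nice_preact (hWm : Measurable (Function.uncurry W))
    (hWb : ∀ᵐ q ∂μI2, |Function.uncurry W q| ≤ 1)
    (hl : Fin F → Fin F → Fin K → ℝ) {X : Fin F → ℝ → ℝ} (hX : ∀ g, Nice (X g)) (f : Fin F) :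
    Nice (fun u => ∑ g : Fin F, ∑ k : Fin K, hl f g k * graphonIter W (k : ℕ) (X g) u) := by
  constructor
  · apply Finset.measurable_sum
    intro g _
    apply Finset.measurable_sum
    intro k _
    exact ((hX g).iter hWm hWb (k : ℕ)).meas.const_mul _
  · apply memLp_finset_sum
    intro g _
    apply memLp_finset_sum
    intro k _
    exact ((hX g).iter hWm hWb (k : ℕ)).mem.const_mul _

lemma nice_layer (hWm : Measurable (Function.uncurry W))
    (hWb : ∀ᵐ q ∂μI2, |Function.uncurry W q| ≤ 1) (hρ : NormalizedLipschitz ρ)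
    (hl : Fin F → Fin F → Fin K → ℝ) {X : Fin F → ℝ → ℝ} (hX : ∀ g, Nice (X g)) (f : Fin F) :
    Nice (gnnLayer F K W ρ hl X f) := by
  have hA := nice_preact hWm hWb hl hX f
  have hm : Measurable (gnnLayer F K W ρ hl X f) := (rho_measurable hρ).comp hA.meas
  refine ⟨hm, ?_⟩
  refine MemLp.of_le hA.mem hm.aestronglyMeasurable ?_
  refine Eventually.of_forall fun u => ?_
  show ‖ρ (∑ g : Fin F, ∑ k : Fin K, hl f g k * graphonIter W (k : ℕ) (X g) u)‖ ≤ _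
  rw [Real.norm_eq_abs, Real.norm_eq_abs]
  exact rho_abs_le hρ _

lemma layer_norm_le (hWm : Measurable (Function.uncurry W))
    (hWb : ∀ᵐ q ∂μI2, |Function.uncurry W q| ≤ 1) (hρ : NormalizedLipschitz ρ)
    {hl : Fin F → Fin F → Fin K → ℝ} (hhl : ∀ f g k, |hl f g k| ≤ hbar) (hbar0 : 0 ≤ hbar)
    {X : Fin F → ℝ → ℝ} (hX : ∀ g, Nice (X g)) :
    vecLpNorm F 2 (gnnLayer F K W ρ hl X) ≤ (F:ℝ) * K * hbar * vecLpNorm F 2 X := by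
  set S := vecLpNorm F 2 X with hSdef
  have hS0 : 0 ≤ S := Real.sqrt_nonneg _
  have hB : 0 ≤ hbar * K * (Real.sqrt F * S) :=
    mul_nonneg (mul_nonneg hbar0 (Nat.cast_nonneg _))
      (mul_nonneg (Real.sqrt_nonneg _) hS0)
  have key : ∀ f, n2 (gnnLayer F K W ρ hl X f) ≤ hbar * K * (Real.sqrt F * S) := by
    intro f
    have hA := nice_preact hWm hWb hl hX f
    have hterm : ∀ (g : Fin F) (k : Fin K),
        Nice (fun u => hl f g k * graphonIter W (k : ℕ) (X g) u) := fun g k =>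
      ⟨((hX g).iter hWm hWb (k : ℕ)).meas.const_mul _,
        ((hX g).iter hWm hWb (k : ℕ)).mem.const_mul _⟩
    calc n2 (gnnLayer F K W ρ hl X f)
        ≤ n2 (fun u => ∑ g : Fin F, ∑ k : Fin K, hl f g k * graphonIter W (k : ℕ) (X g) u) := by
          refine n2_mono (Eventually.of_forall fun u => ?_) hA.mem2
          exact rho_abs_le hρ _
      _ ≤ ∑ g : Fin F, n2 (fun u => ∑ k : Fin K, hl f g k * graphonIter W (k : ℕ) (X g) u) :=
          n2_sum_le Finset.univ _ fun g _ => memLp_finset_sum _ fun k _ => (hterm g k).mem2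
      _ ≤ ∑ g : Fin F, ∑ k : Fin K, n2 (fun u => hl f g k * graphonIter W (k : ℕ) (X g) u) :=
          Finset.sum_le_sum fun g _ => n2_sum_le Finset.univ _ fun k _ => (hterm g k).mem2
      _ ≤ ∑ g : Fin F, ∑ _k : Fin K, hbar * n2 (X g) := by
          refine Finset.sum_le_sum fun g _ => Finset.sum_le_sum fun k _ => ?_
          rw [n2_const_mul]
          exact mul_le_mul (hhl f g k) (n2_iter_le hWm hWb (hX g) (k : ℕ))
            (n2_nonneg _) hbar0
      _ = (K:ℝ) * hbar * ∑ g : Fin F, n2 (X g) := by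
          simp only [Finset.sum_const, Finset.card_univ, Fintype.card_fin, nsmul_eq_mul]
          rw [Finset.mul_sum]
          exact Finset.sum_congr rfl fun g _ => by ring
      _ ≤ hbar * K * (Real.sqrt F * S) := by
          have := sum_n2_le X
          have hKb : 0 ≤ (K:ℝ) * hbar := mul_nonneg (Nat.cast_nonneg _) hbar0
          calc (K:ℝ) * hbar * ∑ g : Fin F, n2 (X g)
              ≤ (K:ℝ) * hbar * (Real.sqrt F * S) := mul_le_mul_of_nonneg_left this hKb
            _ = hbar * K * (Real.sqrt F * S) := by ring
  calc vecLpNorm F 2 (gnnLayer F K W ρ hl X)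
      ≤ Real.sqrt F * (hbar * K * (Real.sqrt F * S)) := vec_le_of_forall hB key
    _ = (Real.sqrt F * Real.sqrt F) * (K * hbar * S) := by ring
    _ = (F:ℝ) * K * hbar * S := by rw [Real.mul_self_sqrt (by positivity)]; ring

end Layer

section Main

variable {F K : ℕ} {W Wt : ℝ → ℝ → ℝ} {ρ : ℝ → ℝ} {hbar : ℝ}

lemma layer_diff_le (hWm : Measurable (Function.uncurry W))
    (hWtm : Measurable (Function.uncurry Wt))
    (hWb : ∀ᵐ q ∂μI2, |Function.uncurry W q| ≤ 1)
    (hWtb : ∀ᵐ q ∂μI2, |Function.uncurry Wt q| ≤ 1)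
    (hρ : NormalizedLipschitz ρ)
    {hl : Fin F → Fin F → Fin K → ℝ} (hhl : ∀ f g k, |hl f g k| ≤ hbar) (hbar0 : 0 ≤ hbar)
    {X Xt : Fin F → ℝ → ℝ} (hX : ∀ g, Nice (X g)) (hXt : ∀ g, Nice (Xt g)) :
    vecLpNorm F 2 (fun f u => gnnLayer F K Wt ρ hl Xt f u - gnnLayer F K W ρ hl X f u)
      ≤ (F:ℝ) * K * hbar *
        (vecLpNorm F 2 (fun f u => Xt f u - X f u)
          + K * graphonOpNormSub Wt W * vecLpNorm F 2 X) := by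
  set Δ : ℝ := graphonOpNormSub Wt W with hΔdef
  have hΔ : 0 ≤ Δ := opNormSub_nonneg Wt W
  set D := vecLpNorm F 2 (fun f u => Xt f u - X f u) with hDdef
  set S := vecLpNorm F 2 X with hSdef
  have hD0 : 0 ≤ D := Real.sqrt_nonneg _
  have hS0 : 0 ≤ S := Real.sqrt_nonneg _
  have hB : 0 ≤ hbar * K * (Real.sqrt F * D + (K:ℝ) * Δ * (Real.sqrt F * S)) := by
    have h1 : (0:ℝ) ≤ Real.sqrt F * D := mul_nonneg (Real.sqrt_nonneg _) hD0
    have h2 : (0:ℝ) ≤ (K:ℝ) * Δ * (Real.sqrt F * S) :=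
      mul_nonneg (mul_nonneg (Nat.cast_nonneg _) hΔ)
        (mul_nonneg (Real.sqrt_nonneg _) hS0)
    exact mul_nonneg (mul_nonneg hbar0 (Nat.cast_nonneg _)) (by linarith)
  have key : ∀ f, n2 (fun u => gnnLayer F K Wt ρ hl Xt f u - gnnLayer F K W ρ hl X f u)
      ≤ hbar * K * (Real.sqrt F * D + (K:ℝ) * Δ * (Real.sqrt F * S)) := by
    intro f
    have hAt := nice_preact hWtm hWtb hl hXt f
    have hA := nice_preact hWm hWb hl hX f
    have hdn : ∀ (g : Fin F) (k : Fin K),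
        Nice (fun u => graphonIter Wt (k : ℕ) (Xt g) u - graphonIter W (k : ℕ) (X g) u) :=
      fun g k => ((hXt g).iter hWtm hWtb (k : ℕ)).sub ((hX g).iter hWm hWb (k : ℕ))
    have hterm : ∀ (g : Fin F) (k : Fin K),
        Nice (fun u => hl f g k *
          (graphonIter Wt (k : ℕ) (Xt g) u - graphonIter W (k : ℕ) (X g) u)) :=
      fun g k => ⟨(hdn g k).meas.const_mul _, (hdn g k).mem.const_mul _⟩
    calc n2 (fun u => gnnLayer F K Wt ρ hl Xt f u - gnnLayer F K W ρ hl X f u)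
        ≤ n2 (fun u =>
            (∑ g : Fin F, ∑ k : Fin K, hl f g k * graphonIter Wt (k : ℕ) (Xt g) u)
            - ∑ g : Fin F, ∑ k : Fin K, hl f g k * graphonIter W (k : ℕ) (X g) u) := by
          refine n2_mono (Eventually.of_forall fun u => ?_) (hAt.sub hA).mem2
          exact hρ.1 _ _
      _ = n2 (fun u => ∑ g : Fin F, ∑ k : Fin K, hl f g k *
            (graphonIter Wt (k : ℕ) (Xt g) u - graphonIter W (k : ℕ) (X g) u)) := by
          refine congrArg n2 (funext fun u => ?_)
          rw [← Finset.sum_sub_distrib]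
          refine Finset.sum_congr rfl fun g _ => ?_
          rw [← Finset.sum_sub_distrib]
          exact Finset.sum_congr rfl fun k _ => (mul_sub _ _ _).symm
      _ ≤ ∑ g : Fin F, n2 (fun u => ∑ k : Fin K, hl f g k *
            (graphonIter Wt (k : ℕ) (Xt g) u - graphonIter W (k : ℕ) (X g) u)) :=
          n2_sum_le Finset.univ _ fun g _ => memLp_finset_sum _ fun k _ => (hterm g k).mem2
      _ ≤ ∑ g : Fin F, ∑ k : Fin K, n2 (fun u => hl f g k *
            (graphonIter Wt (k : ℕ) (Xt g) u - graphonIter W (k : ℕ) (X g) u)) :=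
          Finset.sum_le_sum fun g _ => n2_sum_le Finset.univ _ fun k _ => (hterm g k).mem2
      _ ≤ ∑ g : Fin F, ∑ _k : Fin K,
            hbar * (n2 (fun u => Xt g u - X g u) + (K:ℝ) * Δ * n2 (X g)) := by
          refine Finset.sum_le_sum fun g _ => Finset.sum_le_sum fun k _ => ?_
          rw [n2_const_mul]
          have hd := iter_diff_le hWm hWtm hWb hWtb (hX g) (hXt g) (k : ℕ)
          have hk : ((k : ℕ) : ℝ) ≤ (K:ℝ) := by exact_mod_cast k.2.le
          have hkd : ((k : ℕ) : ℝ) * Δ * n2 (X g) ≤ (K:ℝ) * Δ * n2 (X g) :=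
            mul_le_mul_of_nonneg_right (mul_le_mul_of_nonneg_right hk hΔ) (n2_nonneg _)
          have hb1 : n2 (fun u => graphonIter Wt (k : ℕ) (Xt g) u
                - graphonIter W (k : ℕ) (X g) u)
              ≤ n2 (fun u => Xt g u - X g u) + (K:ℝ) * Δ * n2 (X g) := by
            rw [hΔdef]; rw [hΔdef] at hkd; linarith
          exact mul_le_mul (hhl f g k) hb1 (n2_nonneg _) hbar0
      _ = ∑ g : Fin F, (K:ℝ) *
            (hbar * (n2 (fun u => Xt g u - X g u) + (K:ℝ) * Δ * n2 (X g))) := by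
          refine Finset.sum_congr rfl fun g _ => ?_
          rw [Finset.sum_const, Finset.card_univ, Fintype.card_fin, nsmul_eq_mul]
      _ ≤ hbar * K * (Real.sqrt F * D + (K:ℝ) * Δ * (Real.sqrt F * S)) := by
          have e1 : ∑ g : Fin F, n2 (fun u => Xt g u - X g u) ≤ Real.sqrt F * D := by
            have := sum_n2_le (F := F) (fun g u => Xt g u - X g u)
            rw [← hDdef] at this
            exact this
          have e2 : ∑ g : Fin F, n2 (X g) ≤ Real.sqrt F * S := by
            have := sum_n2_le X
            rw [← hSdef] at this
            exact this
          have expand : ∑ g : Fin F, (K:ℝ) *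
                (hbar * (n2 (fun u => Xt g u - X g u) + (K:ℝ) * Δ * n2 (X g)))
              = (K:ℝ) * hbar * (∑ g : Fin F, n2 (fun u => Xt g u - X g u))
                + (K:ℝ) * hbar * (K:ℝ) * Δ * (∑ g : Fin F, n2 (X g)) := by
            conv_rhs => rw [Finset.mul_sum, Finset.mul_sum, ← Finset.sum_add_distrib]
            exact Finset.sum_congr rfl fun g _ => by ring
          rw [expand]
          have hKb : (0:ℝ) ≤ (K:ℝ) * hbar := mul_nonneg (Nat.cast_nonneg _) hbar0
          have t1 := mul_le_mul_of_nonneg_left e1 hKb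
          have t2 := mul_le_mul_of_nonneg_left e2
            (mul_nonneg (mul_nonneg hKb (Nat.cast_nonneg K)) hΔ)
          nlinarith [t1, t2]
  calc vecLpNorm F 2 (fun f u => gnnLayer F K Wt ρ hl Xt f u - gnnLayer F K W ρ hl X f u)
      ≤ Real.sqrt F * (hbar * K * (Real.sqrt F * D + (K:ℝ) * Δ * (Real.sqrt F * S))) := by
        refine vec_le_of_forall hB ?_
        intro f
        exact key f
    _ = (Real.sqrt F * Real.sqrt F) * (K * hbar * D)
        + (Real.sqrt F * Real.sqrt F) * (hbar * K * K * Δ * S) := by ring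
    _ = (F:ℝ) * K * hbar * (D + (K:ℝ) * Δ * S) := by
        rw [Real.mul_self_sqrt (by positivity)]; ring

lemma iter_ae {W : ℝ → ℝ → ℝ} {x y : ℝ → ℝ} (hxy : x =ᵐ[μI] y) (k : ℕ) :
    graphonIter W k x =ᵐ[μI] graphonIter W k y := by
  induction k with
  | zero => simpa [graphonIter] using hxy
  | succ k ih =>
      have ex : graphonIter W (k+1) x = graphonOp W (graphonIter W k x) := by
        rw [graphonIter, Function.iterate_succ_apply']; rfl
      have ey : graphonIter W (k+1) y = graphonOp W (graphonIter W k y) := by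
        rw [graphonIter, Function.iterate_succ_apply']; rfl
      rw [ex, ey, graphonOp_congr ih]

lemma layer_ae (hl : Fin F → Fin F → Fin K → ℝ)
    {X Y : Fin F → ℝ → ℝ} (hXY : ∀ g, X g =ᵐ[μI] Y g) (f : Fin F) :
    gnnLayer F K W ρ hl X f =ᵐ[μI] gnnLayer F K W ρ hl Y f := by
  have hall : ∀ᵐ u ∂μI, ∀ (g : Fin F) (k : Fin K),
      graphonIter W (k : ℕ) (X g) u = graphonIter W (k : ℕ) (Y g) u := by
    rw [ae_all_iff]
    intro g
    rw [ae_all_iff]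
    intro k
    exact iter_ae (hXY g) (k : ℕ)
  filter_upwards [hall] with u hu
  show ρ _ = ρ _
  congr 1
  exact Finset.sum_congr rfl fun g _ => Finset.sum_congr rfl fun k _ => by rw [hu g k]

lemma foldl_ae (hs : List (Fin F → Fin F → Fin K → ℝ)) :
    ∀ {X Y : Fin F → ℝ → ℝ}, (∀ g, X g =ᵐ[μI] Y g) →
    ∀ f, (hs.foldl (fun Z hl => gnnLayer F K W ρ hl Z) X) f
      =ᵐ[μI] (hs.foldl (fun Z hl => gnnLayer F K W ρ hl Z) Y) f := by
  induction hs with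
  | nil => intro X Y hXY f; exact hXY f
  | cons hl rest ih =>
      intro X Y hXY f
      simp only [List.foldl_cons]
      exact ih (fun g => layer_ae hl hXY g) f

lemma foldl_bound (hρ : NormalizedLipschitz ρ)
    (hWm : Measurable (Function.uncurry W)) (hWtm : Measurable (Function.uncurry Wt))
    (hWb : ∀ᵐ q ∂μI2, |Function.uncurry W q| ≤ 1)
    (hWtb : ∀ᵐ q ∂μI2, |Function.uncurry Wt q| ≤ 1)
    (hbar0 : 0 ≤ hbar) :
    ∀ (hs : List (Fin F → Fin F → Fin K → ℝ)),
      (∀ hl ∈ hs, ∀ f g k, |hl f g k| ≤ hbar) →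
      ∀ {X Xt : Fin F → ℝ → ℝ}, (∀ g, Nice (X g)) → (∀ g, Nice (Xt g)) →
      (vecLpNorm F 2 (hs.foldl (fun Y hl => gnnLayer F K W ρ hl Y) X)
          ≤ ((F:ℝ) * K * hbar) ^ hs.length * vecLpNorm F 2 X)
      ∧ vecLpNorm F 2 (fun f u => (hs.foldl (fun Y hl => gnnLayer F K Wt ρ hl Y) Xt) f u
            - (hs.foldl (fun Y hl => gnnLayer F K W ρ hl Y) X) f u)
          ≤ ((F:ℝ) * K * hbar) ^ hs.length *
            (vecLpNorm F 2 (fun f u => Xt f u - X f u)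
              + (hs.length : ℝ) * K * graphonOpNormSub Wt W * vecLpNorm F 2 X) := by
  intro hs
  induction hs with
  | nil =>
      intro _ X Xt hX hXt
      constructor
      · simp [List.foldl_nil]
      · simp [List.foldl_nil]
  | cons hl rest ih =>
      intro hbs X Xt hX hXt
      have hhl : ∀ f g k, |hl f g k| ≤ hbar := hbs hl List.mem_cons_self
      have hrest : ∀ hl' ∈ rest, ∀ f g k, |hl' f g k| ≤ hbar := fun hl' h' =>
        hbs hl' (List.mem_cons_of_mem hl h')
      have hY : ∀ g, Nice (gnnLayer F K W ρ hl X g) := fun g => nice_layer hWm hWb hρ hl hX g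
      have hYt : ∀ g, Nice (gnnLayer F K Wt ρ hl Xt g) := fun g =>
        nice_layer hWtm hWtb hρ hl hXt g
      obtain ⟨ihS, ihD⟩ := ih hrest hY hYt
      simp only [List.foldl_cons, List.length_cons]
      set C : ℝ := (F:ℝ) * K * hbar with hC
      have hC0 : 0 ≤ C := mul_nonneg (mul_nonneg (Nat.cast_nonneg _) (Nat.cast_nonneg _)) hbar0
      set Δ : ℝ := graphonOpNormSub Wt W with hΔd
      have hΔ0 : 0 ≤ Δ := opNormSub_nonneg _ _
      have hS1 : vecLpNorm F 2 (gnnLayer F K W ρ hl X) ≤ C * vecLpNorm F 2 X :=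
        layer_norm_le hWm hWb hρ hhl hbar0 hX
      have hD1 : vecLpNorm F 2
            (fun f u => gnnLayer F K Wt ρ hl Xt f u - gnnLayer F K W ρ hl X f u)
          ≤ C * (vecLpNorm F 2 (fun f u => Xt f u - X f u) + K * Δ * vecLpNorm F 2 X) :=
        layer_diff_le hWm hWtm hWb hWtb hρ hhl hbar0 hX hXt
      constructor
      · calc vecLpNorm F 2
              (rest.foldl (fun Y hl => gnnLayer F K W ρ hl Y) (gnnLayer F K W ρ hl X))
            ≤ C ^ rest.length * vecLpNorm F 2 (gnnLayer F K W ρ hl X) := ihS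
          _ ≤ C ^ rest.length * (C * vecLpNorm F 2 X) :=
              mul_le_mul_of_nonneg_left hS1 (pow_nonneg hC0 _)
          _ = C ^ (rest.length + 1) * vecLpNorm F 2 X := by rw [pow_succ]; ring
      · push_cast
        have key : vecLpNorm F 2
              (fun f u => gnnLayer F K Wt ρ hl Xt f u - gnnLayer F K W ρ hl X f u)
              + (rest.length : ℝ) * K * Δ * vecLpNorm F 2 (gnnLayer F K W ρ hl X)
            ≤ C * (vecLpNorm F 2 (fun f u => Xt f u - X f u) + K * Δ * vecLpNorm F 2 X)
              + (rest.length : ℝ) * K * Δ * (C * vecLpNorm F 2 X) :=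
          add_le_add hD1 (mul_le_mul_of_nonneg_left hS1
            (mul_nonneg (mul_nonneg (Nat.cast_nonneg _) (Nat.cast_nonneg _)) hΔ0))
        calc vecLpNorm F 2 (fun f u =>
                (rest.foldl (fun Y hl => gnnLayer F K Wt ρ hl Y) (gnnLayer F K Wt ρ hl Xt)) f u
                - (rest.foldl (fun Y hl => gnnLayer F K W ρ hl Y) (gnnLayer F K W ρ hl X)) f u)
            ≤ C ^ rest.length *
              (vecLpNorm F 2 (fun f u => gnnLayer F K Wt ρ hl Xt f u - gnnLayer F K W ρ hl X f u)
                + (rest.length : ℝ) * K * Δ * vecLpNorm F 2 (gnnLayer F K W ρ hl X)) := ihD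
          _ ≤ C ^ rest.length *
              (C * (vecLpNorm F 2 (fun f u => Xt f u - X f u) + K * Δ * vecLpNorm F 2 X)
                + (rest.length : ℝ) * K * Δ * (C * vecLpNorm F 2 X)) :=
              mul_le_mul_of_nonneg_left key (pow_nonneg hC0 _)
          _ = C ^ (rest.length + 1) *
              (vecLpNorm F 2 (fun f u => Xt f u - X f u)
                + ((rest.length : ℝ) + 1) * K * Δ * vecLpNorm F 2 X) := by
              rw [pow_succ]; ring

end Main

end GnnAux

end GnnAux

/-- **Stability of graphon neural networks.**
For a normalized Lipschitz activation, kernels `W, W̃` with `|W| ≤ 1`, `|W̃| ≤ 1` a.e., and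
filters bounded by `h̄`, the `L`-layer graphon neural network satisfies
`‖Φ(W̃;X̃;h) − Φ(W;X;h)‖_{L²} ≤ (F K h̄)^L (‖X̃ − X‖_{L²} + L K ‖T_{W̃} − T_W‖_{L²→L²} ‖X‖_{L²})`. -/
theorem gnn_stability
    (F K L : ℕ) (hF : 1 ≤ F) (hK : 1 ≤ K) (hL : 1 ≤ L)
    (ρ : ℝ → ℝ) (hρ : NormalizedLipschitz ρ)
    (W Wt : ℝ → ℝ → ℝ)
    (hWm : Measurable (Function.uncurry W)) (hWtm : Measurable (Function.uncurry Wt))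
    (hWb : ∀ᵐ q ∂μI2, |Function.uncurry W q| ≤ 1)
    (hWtb : ∀ᵐ q ∂μI2, |Function.uncurry Wt q| ≤ 1)
    (h : Fin L → Fin F → Fin F → Fin K → ℝ) (hbar : ℝ)
    (hh : ∀ ℓ f g k, |h ℓ f g k| ≤ hbar)
    (X Xt : Fin F → ℝ → ℝ)
    (hX : ∀ f, MemLp (X f) ⊤ μI) (hXt : ∀ f, MemLp (Xt f) ⊤ μI) :
    vecLpNorm F 2 (fun f u => gnn F K L Wt ρ h Xt f u - gnn F K L W ρ h X f u)
      ≤ ((F : ℝ) * K * hbar) ^ L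
          * (vecLpNorm F 2 (fun f u => Xt f u - X f u)
            + (L : ℝ) * K * graphonOpNormSub Wt W * vecLpNorm F 2 X) := by
  classical
  have hbar0 : 0 ≤ hbar :=
    le_trans (abs_nonneg _) (hh ⟨0, hL⟩ ⟨0, hF⟩ ⟨0, hF⟩ ⟨0, hK⟩)
  set X' : Fin F → ℝ → ℝ := fun g => (hX g).aestronglyMeasurable.mk (X g) with hX'def
  set Xt' : Fin F → ℝ → ℝ := fun g => (hXt g).aestronglyMeasurable.mk (Xt g) with hXt'def
  have hXe : ∀ g, X g =ᵐ[μI] X' g := fun g => (hX g).aestronglyMeasurable.ae_eq_mk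
  have hXte : ∀ g, Xt g =ᵐ[μI] Xt' g := fun g => (hXt g).aestronglyMeasurable.ae_eq_mk
  have hX'n : ∀ g, GnnAux.Nice (X' g) := fun g =>
    ⟨(hX g).aestronglyMeasurable.stronglyMeasurable_mk.measurable, (hX g).ae_eq (hXe g)⟩
  have hXt'n : ∀ g, GnnAux.Nice (Xt' g) := fun g =>
    ⟨(hXt g).aestronglyMeasurable.stronglyMeasurable_mk.measurable, (hXt g).ae_eq (hXte g)⟩
  have hgW : ∀ f, gnn F K L W ρ h X f =ᵐ[μI] gnn F K L W ρ h X' f := fun f =>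
    GnnAux.foldl_ae (List.ofFn h) hXe f
  have hgWt : ∀ f, gnn F K L Wt ρ h Xt f =ᵐ[μI] gnn F K L Wt ρ h Xt' f := fun f =>
    GnnAux.foldl_ae (List.ofFn h) hXte f
  have hv1 : vecLpNorm F 2 (fun f u => gnn F K L Wt ρ h Xt f u - gnn F K L W ρ h X f u)
      = vecLpNorm F 2 (fun f u => gnn F K L Wt ρ h Xt' f u - gnn F K L W ρ h X' f u) :=
    GnnAux.vec_congr fun f => by
      filter_upwards [hgWt f, hgW f] with u h1 h2
      show gnn F K L Wt ρ h Xt f u - gnn F K L W ρ h X f u = _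
      rw [h1, h2]
  have hv2 : vecLpNorm F 2 (fun f u => Xt f u - X f u)
      = vecLpNorm F 2 (fun f u => Xt' f u - X' f u) :=
    GnnAux.vec_congr fun f => by
      filter_upwards [hXte f, hXe f] with u h1 h2
      show Xt f u - X f u = _
      rw [h1, h2]
  have hv3 : vecLpNorm F 2 X = vecLpNorm F 2 X' := GnnAux.vec_congr hXe
  rw [hv1, hv2, hv3]
  have hmem : ∀ hl ∈ List.ofFn h, ∀ f g k, |hl f g k| ≤ hbar := by
    intro hl hmm f g k
    rw [List.mem_ofFn] at hmm
    obtain ⟨ℓ, rfl⟩ := hmm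
    exact hh ℓ f g k
  have main := (GnnAux.foldl_bound hρ hWm hWtm hWb hWtb hbar0 (List.ofFn h) hmem hX'n hXt'n).2
  rw [List.length_ofFn] at main
  exact main
end

section
/- Let a > 0 and b, c ≥ 0, and let u : [0,∞) → [0,∞) be a continuous function satisfying u(t) ≤ c + ∫₀ᵗ ( a u(s) + b u(s)^{1/2} ) ds for all t ≥ 0. Then for all t ≥ 0, u(t) ≤ ( c^{1/2} exp(at/2) + b (exp(at/2) − 1)/a )². -/
open MeasureTheory Filter Set
open scoped ENNReal NNReal

/-- **Generalized Grönwall inequality.**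
If `u : [0,∞) → [0,∞)` is continuous and satisfies
`u(t) ≤ c + ∫₀ᵗ (a u(s) + b √(u(s))) ds` for all `t ≥ 0` (with `a > 0`, `b, c ≥ 0`), then
`u(t) ≤ (√c exp(at/2) + b (exp(at/2) − 1)/a)²` for all `t ≥ 0`. -/
theorem generalized_gronwall
    (a b c : ℝ) (ha : 0 < a) (hb : 0 ≤ b) (hc : 0 ≤ c)
    (u : ℝ → ℝ) (hu : ContinuousOn u (Set.Ici 0))
    (hu0 : ∀ t, 0 ≤ t → 0 ≤ u t)
    (hineq : ∀ t, 0 ≤ t →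
      u t ≤ c + ∫ s in (0:ℝ)..t, (a * u s + b * Real.sqrt (u s))) :
    ∀ t, 0 ≤ t →
      u t ≤ (Real.sqrt c * Real.exp (a * t / 2)
              + b * (Real.exp (a * t / 2) - 1) / a) ^ 2 := by
  intro t ht
  -- continuous extension of the integrand to all of ℝ
  set g : ℝ → ℝ := fun s => a * u (max s 0) + b * Real.sqrt (u (max s 0)) with hgdef
  have humax : Continuous fun s : ℝ => u (max s 0) :=
    hu.comp_continuous (continuous_id.max continuous_const) fun x => Set.mem_Ici.2 (le_max_right _ _)
  have hgc : Continuous g := by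
    apply Continuous.add (continuous_const.mul humax)
      (continuous_const.mul (humax.sqrt))
  have hg0 : ∀ s, 0 ≤ g s := fun s =>
    add_nonneg (mul_nonneg ha.le (hu0 _ (le_max_right _ _)))
      (mul_nonneg hb (Real.sqrt_nonneg _))
  -- inequality with g
  have hineqg : ∀ x, 0 ≤ x → u x ≤ c + ∫ s in (0:ℝ)..x, g s := by
    intro x hx
    have : (∫ s in (0:ℝ)..x, (a * u s + b * Real.sqrt (u s))) = ∫ s in (0:ℝ)..x, g s := by
      apply intervalIntegral.integral_congr
      intro s hs
      rw [Set.uIcc_of_le hx] at hs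
      simp [hgdef, max_eq_left hs.1]
    simpa [this] using hineq x hx
  set E := Real.exp (a * t / 2) with hE
  have hE1 : 1 ≤ E := by
    rw [hE]
    exact Real.one_le_exp (by positivity)
  have key : ∀ ε > (0:ℝ),
      u t ≤ (Real.sqrt (c + ε) * E + b * (E - 1) / a) ^ 2 := by
    intro ε hε
    set v : ℝ → ℝ := fun x => c + ε + ∫ s in (0:ℝ)..x, g s with hvdef
    have hvd : ∀ x, HasDerivAt v (g x) x := fun x =>
      ((hgc.integral_hasStrictDerivAt 0 x).hasDerivAt).const_add (c + ε)
    have hvc : Continuous v := by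
      have := fun x => (hvd x).continuousAt
      exact continuous_iff_continuousAt.2 this
    have hvpos : ∀ x, 0 ≤ x → 0 < v x := by
      intro x hx
      have hint : 0 ≤ ∫ s in (0:ℝ)..x, g s :=
        intervalIntegral.integral_nonneg hx fun s _ => hg0 s
      have : 0 < c + ε := by linarith
      simp only [hvdef]; linarith
    have huv : ∀ x, 0 ≤ x → u x ≤ v x := by
      intro x hx
      have := hineqg x hx
      simp only [hvdef]; linarith
    set w : ℝ → ℝ := fun x => Real.sqrt (v x) with hwdef
    have hwd : ∀ x ∈ Set.Ico (0:ℝ) t,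
        HasDerivWithinAt w (g x / (2 * Real.sqrt (v x))) (Set.Ici x) x := by
      intro x hx
      exact ((hvd x).sqrt (hvpos x hx.1).ne').hasDerivWithinAt
    have hbound : ∀ x ∈ Set.Ico (0:ℝ) t,
        ‖g x / (2 * Real.sqrt (v x))‖ ≤ (a / 2) * ‖w x‖ + b / 2 := by
      intro x hx
      have hvp := hvpos x hx.1
      have hsvp : 0 < Real.sqrt (v x) := Real.sqrt_pos.2 hvp
      have hg0x := hg0 x
      rw [Real.norm_of_nonneg (by positivity), Real.norm_of_nonneg (Real.sqrt_nonneg _)]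
      rw [div_le_iff₀ (by positivity)]
      have hmul : Real.sqrt (v x) * Real.sqrt (v x) = v x := Real.mul_self_sqrt hvp.le
      have hux : u x ≤ v x := huv x hx.1
      have hsux : Real.sqrt (u x) ≤ Real.sqrt (v x) := Real.sqrt_le_sqrt hux
      have hgx : g x ≤ a * v x + b * Real.sqrt (v x) := by
        have hmx : max x 0 = x := max_eq_left hx.1
        simp only [hgdef, hmx]
        have := hu0 x hx.1
        nlinarith [Real.sqrt_nonneg (u x)]
      calc g x ≤ a * v x + b * Real.sqrt (v x) := hgx
        _ = (a / 2 * w x + b / 2) * (2 * Real.sqrt (v x)) := by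
            linear_combination (-a) * hmul
    have hw0 : ‖w 0‖ ≤ Real.sqrt (c + ε) := by
      have h0 : v 0 = c + ε := by simp [hvdef]
      rw [Real.norm_of_nonneg (Real.sqrt_nonneg _), h0]
    have hwc : ContinuousOn w (Set.Icc 0 t) := (hvc.sqrt).continuousOn
    have := norm_le_gronwallBound_of_norm_deriv_right_le hwc hwd hw0 hbound t
      (Set.right_mem_Icc.2 ht)
    rw [Real.norm_of_nonneg (Real.sqrt_nonneg _)] at this
    rw [gronwallBound_of_K_ne_0 (by positivity : (a:ℝ)/2 ≠ 0)] at this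
    simp only [sub_zero] at this
    have hEeq : Real.exp (a / 2 * t) = E := by rw [hE]; ring_nf
    rw [hEeq] at this
    have hdiv : b / 2 / (a / 2) = b / a := by
      field_simp
    rw [hdiv] at this
    have hwt : w t = Real.sqrt (v t) := rfl
    have hvt : v t = w t ^ 2 := by
      rw [hwt, Real.sq_sqrt (hvpos t ht).le]
    have hut : u t ≤ w t ^ 2 := by rw [← hvt]; exact huv t ht
    have hrhs : Real.sqrt (c + ε) * E + b / a * (E - 1)
        = Real.sqrt (c + ε) * E + b * (E - 1) / a := by ring
    rw [hrhs] at this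
    calc u t ≤ w t ^ 2 := hut
      _ ≤ (Real.sqrt (c + ε) * E + b * (E - 1) / a) ^ 2 := by
          apply pow_le_pow_left₀ (Real.sqrt_nonneg _) this
  -- take ε → 0⁺
  have hlim : Tendsto (fun ε : ℝ => (Real.sqrt (c + ε) * E + b * (E - 1) / a) ^ 2)
      (nhdsWithin 0 (Set.Ioi 0)) (nhds ((Real.sqrt c * E + b * (E - 1) / a) ^ 2)) := by
    have hcont : Continuous fun ε : ℝ => (Real.sqrt (c + ε) * E + b * (E - 1) / a) ^ 2 := by
      apply Continuous.pow
      exact ((continuous_const.add continuous_id).sqrt.mul continuous_const).add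
        continuous_const
    have h := (hcont.tendsto 0).mono_left (nhdsWithin_le_nhds (s := Set.Ioi (0:ℝ)))
    simpa using h
  have hev : ∀ᶠ ε in nhdsWithin (0:ℝ) (Set.Ioi 0),
      u t ≤ (Real.sqrt (c + ε) * E + b * (E - 1) / a) ^ 2 := by
    filter_upwards [self_mem_nhdsWithin] with ε hε
    exact key ε hε
  exact ge_of_tendsto hlim hev
end
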